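/- arXiv:alg-geom/9402011 — 9 statements merged into one kernel-verified Lean document; each statement's English description precedes it below -/
import Mathlib

section
/- For α ∈ I(m,p) let S(α) = {α_j + kn : 1 ≤ j ≤ m, k ∈ ℕ, k ≥ 0} ⊆ ℤ. Then for all α, β ∈ I(m,p): α ≤ β componentwise if and only if for every integer x one has #{s ∈ S(β) : s ≤ x} ≤ #{s ∈ S(α) : s ≤ x}. (The counting condition is equivalent to saying that the l-th smallest element of S(α) is at most the l-th smallest element of S(β) for every l, i.e. it is the partial order on index sets defined in the paper via the sequences f(α); thus that partial order restricted to I(m,p) agrees with the componentwise order.) -/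
/-- `Idx n α` : the tuple `α = (α_1 < ⋯ < α_m)` of positive integers with
`α_m - α_1 < n`, i.e. membership in `I(m,p)` (where `n = m + p`). -/
def Idx (n : ℕ) {m : ℕ} (α : Fin m → ℤ) : Prop :=
  (∀ l, 1 ≤ α l) ∧ StrictMono α ∧ ∀ k l : Fin m, k < l → α l - α k < n

/-- `Sset n α = {α_j + k*n : 1 ≤ j ≤ m, k ∈ ℕ}`. -/
def Sset (n : ℕ) {m : ℕ} (α : Fin m → ℤ) : Set ℤ :=
  {x | ∃ j : Fin m, ∃ k : ℕ, x = α j + (k : ℤ) * n}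

lemma window_aux {n m : ℕ} {γ : Fin m → ℤ} (hγ : Idx n γ) (hn : 0 < n) (j j' : Fin m) :
    γ j - γ j' < n := by
  rcases lt_trichotomy j' j with h | h | h
  · exact hγ.2.2 j' j h
  · subst h; simpa using hn
  · have := hγ.2.1 h
    omega

lemma inj_aux {n m : ℕ} {γ : Fin m → ℤ} (hγ : Idx n γ) (hn : 0 < n) :
    Function.Injective (fun jk : Fin m × ℕ => γ jk.1 + (jk.2 : ℤ) * n) := by
  rintro ⟨j, k⟩ ⟨j', k'⟩ h
  simp only at h
  have h1 : γ j - γ j' = ((k' : ℤ) - k) * n := by rw [sub_mul]; linarith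
  have h2 : |γ j - γ j'| < n :=
    abs_lt.mpr ⟨by linarith [window_aux hγ hn j' j], window_aux hγ hn j j'⟩
  rw [h1, abs_mul, abs_of_nonneg (by positivity : (0:ℤ) ≤ (n:ℤ))] at h2
  have hk : |(k' : ℤ) - k| < 1 := by
    by_contra hc
    push_neg at hc
    nlinarith
  have hk2 := abs_lt.mp hk
  have hkk : k = k' := by omega
  subst hkk
  have hγγ : γ j = γ j' := by omega
  have hj : j = j' := hγ.2.1.injective hγγ
  simp [hj]

lemma count_eq_aux {n m : ℕ} {γ : Fin m → ℤ} (hγ : Idx n γ) (hn : 0 < n) (x : ℤ) :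
    {s ∈ Sset n γ | s ≤ x}
      = (fun jk : Fin m × ℕ => γ jk.1 + (jk.2 : ℤ) * n) ''
          {jk : Fin m × ℕ | γ jk.1 + (jk.2 : ℤ) * n ≤ x} := by
  ext s
  constructor
  · rintro ⟨⟨j, k, rfl⟩, hx⟩
    exact ⟨(j, k), hx, rfl⟩
  · rintro ⟨⟨j, k⟩, h, rfl⟩
    exact ⟨⟨j, k, rfl⟩, h⟩

lemma finite_aux {n m : ℕ} {γ : Fin m → ℤ} (hγ : Idx n γ) (hn : 0 < n) (x : ℤ) :
    ({jk : Fin m × ℕ | γ jk.1 + (jk.2 : ℤ) * n ≤ x}).Finite := by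
  apply Set.Finite.subset ((Set.finite_univ (α := Fin m)).prod (Set.finite_Iic x.toNat))
  rintro ⟨j, k⟩ hjk
  simp only [Set.mem_setOf_eq] at hjk
  refine ⟨Set.mem_univ _, ?_⟩
  have h1 : (1 : ℤ) ≤ γ j := hγ.1 j
  have h2 : (k : ℤ) ≤ (k : ℤ) * n := le_mul_of_one_le_right (by positivity) (by exact_mod_cast hn)
  simp only [Set.mem_Iic]
  omega

/-- The componentwise order on `I(m,p)` coincides with the order defined by
comparing the increasing enumerations of the sets `S(α)`: `α ≤ β`
componentwise iff for every integer `x` the set `S(β)` has at most as many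
elements `≤ x` as `S(α)` does. -/
theorem stmt0 (m p : ℕ) (hm : 1 ≤ m) (hp : 1 ≤ p) (n : ℕ) (hn : n = m + p)
    (α β : Fin m → ℤ) (hα : Idx n α) (hβ : Idx n β) :
    (∀ l, α l ≤ β l) ↔
      ∀ x : ℤ, ({s ∈ Sset n β | s ≤ x}).ncard ≤ ({s ∈ Sset n α | s ≤ x}).ncard := by
  have hn0 : 0 < n := by omega
  constructor
  · intro h x
    rw [count_eq_aux hα hn0 x, count_eq_aux hβ hn0 x,
      Set.ncard_image_of_injective _ (inj_aux hα hn0),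
      Set.ncard_image_of_injective _ (inj_aux hβ hn0)]
    apply Set.ncard_le_ncard _ (finite_aux hα hn0 x)
    rintro ⟨j, k⟩ hjk
    simp only [Set.mem_setOf_eq] at hjk ⊢
    have := h j
    omega
  · intro H l
    by_contra hc
    push_neg at hc
    have Hx := H (β l)
    -- the β-side count is exactly l+1
    have hβeq : {s ∈ Sset n β | s ≤ β l} = β '' Set.Iic l := by
      ext s
      constructor
      · rintro ⟨⟨j, k, rfl⟩, hx⟩
        have hwin := window_aux hβ hn0 l j
        have hk0 : k = 0 := by
          by_contra hk
          have h1 : (1 : ℤ) ≤ (k : ℤ) := by exact_mod_cast Nat.one_le_iff_ne_zero.mpr hk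
          have h2 : (n : ℤ) ≤ (k : ℤ) * n := le_mul_of_one_le_left (by positivity) h1
          omega
        subst hk0
        simp only [Nat.cast_zero, zero_mul, add_zero] at hx ⊢
        have hjl : j ≤ l := by
          by_contra hjl
          push_neg at hjl
          exact absurd hx (not_le.mpr (hβ.2.1 hjl))
        exact ⟨j, hjl, rfl⟩
      · rintro ⟨j, hj, rfl⟩
        exact ⟨⟨j, 0, by simp⟩, hβ.2.1.monotone hj⟩
    -- the α-side count is at most l
    have hαsub : {s ∈ Sset n α | s ≤ β l} ⊆ α '' Set.Iio l := by
      rintro s ⟨⟨j, k, rfl⟩, hx⟩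
      have hknn : (0 : ℤ) ≤ (k : ℤ) * n := by positivity
      have hjl : j < l := by
        by_contra hjl
        push_neg at hjl
        have := hα.2.1.monotone hjl
        omega
      have hwin := hα.2.2 j l hjl
      have hk0 : k = 0 := by
        by_contra hk
        have h1 : (1 : ℤ) ≤ (k : ℤ) := by exact_mod_cast Nat.one_le_iff_ne_zero.mpr hk
        have h2 : (n : ℤ) ≤ (k : ℤ) * n := le_mul_of_one_le_left (by positivity) h1
        omega
      subst hk0
      simp only [Nat.cast_zero, zero_mul, add_zero]
      exact ⟨j, hjl, rfl⟩
    have hβcard : ({s ∈ Sset n β | s ≤ β l}).ncard = (l : ℕ) + 1 := by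
      rw [hβeq, Set.ncard_image_of_injective _ hβ.2.1.injective,
        ← Finset.coe_Iic, Set.ncard_coe_finset]
      exact Fin.card_Iic l
    have hαcard : ({s ∈ Sset n α | s ≤ β l}).ncard ≤ (l : ℕ) := by
      calc ({s ∈ Sset n α | s ≤ β l}).ncard ≤ (α '' Set.Iio l).ncard :=
            Set.ncard_le_ncard hαsub (Set.toFinite _)
        _ = (Set.Iio l).ncard := Set.ncard_image_of_injective _ hα.2.1.injective
        _ = (l : ℕ) := by
            rw [← Finset.coe_Iio, Set.ncard_coe_finset]
            simp
    omega
end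

section
/- For α, β ∈ I(m,p), α covers β in the componentwise order (that is, β < α and there is no γ ∈ I(m,p) with β < γ < α) if and only if there exists an index a ∈ {1,…,m} with β = α − e_a, where e_a is the a-th standard basis vector of ℤ^m. -/
/-- `α` covers `β` in `I(m,p)`: `β < α` and there is no `γ ∈ I(m,p)`
with `β < γ < α`. -/
def Covers (n : ℕ) {m : ℕ} (α β : Fin m → ℤ) : Prop :=
  β < α ∧ ∀ γ : Fin m → ℤ, Idx n γ → β < γ → ¬γ < α

/-- A strictly monotone integer sequence grows at least by the index gap. -/
lemma mono_gap {m : ℕ} {α : Fin m → ℤ} (h : StrictMono α) (k l : Fin m) (hkl : k ≤ l) :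
    ((l : ℕ) : ℤ) - ((k : ℕ) : ℤ) ≤ α l - α k := by
  have key : ∀ d : ℕ, ∀ k l : Fin m, (l : ℕ) = (k : ℕ) + d → (d : ℤ) ≤ α l - α k := by
    intro d
    induction d with
    | zero =>
      intro k l hl
      have : k = l := Fin.ext (by omega)
      subst this; simp
    | succ d ih =>
      intro k l hl
      have hkd : (k : ℕ) + d < m := by have := l.isLt; omega
      have h1 := ih k ⟨(k : ℕ) + d, hkd⟩ rfl
      have h2 : α ⟨(k : ℕ) + d, hkd⟩ < α l := h (by simp [Fin.lt_def]; omega)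
      push_cast
      linarith
  have hd : (l : ℕ) = (k : ℕ) + ((l : ℕ) - (k : ℕ)) := by
    have : (k : ℕ) ≤ (l : ℕ) := hkl
    omega
  have := key ((l : ℕ) - (k : ℕ)) k l hd
  have hk : (k : ℕ) ≤ (l : ℕ) := hkl
  omega

/-- For `α, β ∈ I(m,p)`, `α` covers `β` in the componentwise order if and only
if `β = α - e_a` for some standard basis vector `e_a` of `ℤ^m`. -/
theorem stmt2 (m p : ℕ) (hm : 1 ≤ m) (hp : 1 ≤ p) (n : ℕ) (hn : n = m + p)
    (α β : Fin m → ℤ) (hα : Idx n α) (hβ : Idx n β) :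
    Covers n α β ↔ ∃ a : Fin m, β = α - Pi.single a 1 := by
  obtain ⟨hα1, hα2, hα3⟩ := hα
  obtain ⟨hβ1, hβ2, hβ3⟩ := hβ
  constructor
  · rintro ⟨hlt, hcov⟩
    have hle : β ≤ α := hlt.le
    have hne : β ≠ α := hlt.ne
    have hex : ∃ i, β i < α i := by
      by_contra h
      push_neg at h
      exact hne (funext fun i => le_antisymm (hle i) (h i))
    -- a : maximal index where β < α
    obtain ⟨a, ha, hamax⟩ : ∃ a : Fin m, β a < α a ∧ ∀ l, a < l → β l = α l := by
      set s := Finset.univ.filter (fun i : Fin m => β i < α i) with hs_def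
      have hs : s.Nonempty := by
        obtain ⟨i, hi⟩ := hex
        exact ⟨i, by simp [hs_def, hi]⟩
      refine ⟨s.max' hs, ?_, ?_⟩
      · have := s.max'_mem hs
        simp only [hs_def, Finset.mem_filter] at this
        exact this.2
      · intro l hl
        by_contra h
        have hβl : β l < α l := lt_of_le_of_ne (hle l) h
        have : l ∈ s := by simp [hs_def, hβl]
        exact absurd (s.le_max' l this) (not_le.mpr hl)
    -- b : minimal index of the consecutive run below a
    obtain ⟨b, hb1, hb2, hbmin⟩ :
        ∃ b : Fin m, b ≤ a ∧ α a - α b = ((a : ℕ) : ℤ) - ((b : ℕ) : ℤ) ∧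
          ∀ k : Fin m, k ≤ a → α a - α k = ((a : ℕ) : ℤ) - ((k : ℕ) : ℤ) → b ≤ k := by
      set t := Finset.univ.filter
        (fun c : Fin m => c ≤ a ∧ α a - α c = ((a : ℕ) : ℤ) - ((c : ℕ) : ℤ)) with ht_def
      have ht : t.Nonempty := ⟨a, by simp [ht_def]⟩
      have hmem := t.min'_mem ht
      simp only [ht_def, Finset.mem_filter] at hmem
      refine ⟨t.min' ht, hmem.2.1, hmem.2.2, ?_⟩
      intro k hk1 hk2
      exact t.min'_le k (by simp [ht_def, hk1, hk2])
    -- β b ≤ α b - 1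
    have hβb : β b ≤ α b - 1 := by
      have h1 := mono_gap hβ2 b a hb1
      omega
    set γ : Fin m → ℤ := α - Pi.single b 1 with hγ_def
    have hγ : ∀ l, γ l = if l = b then α b - 1 else α l := by
      intro l
      simp only [hγ_def, Pi.sub_apply, Pi.single_apply]
      split <;> rename_i h
      · rw [h]
      · ring
    have hγIdx : Idx n γ := by
      refine ⟨?_, ?_, ?_⟩
      · intro l
        rw [hγ l]
        split
        · have := hβ1 b; omega
        · exact hα1 l
      · intro k l hkl
        rw [hγ k, hγ l]
        by_cases hlb : l = b
        · rw [hlb] at hkl ⊢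
          have hkb : k ≠ b := ne_of_lt hkl
          -- show α k < α b - 1
          simp only [if_neg hkb, if_pos rfl]
          by_contra hcon
          push_neg at hcon
          have hklt : α k < α b := hα2 hkl
          have hkeq : α k = α b - 1 := by omega
          have hbk : ((b : ℕ) : ℤ) - ((k : ℕ) : ℤ) ≤ 1 := by
            have := mono_gap hα2 k b (le_of_lt hkl)
            omega
          have hk1 : ((k : ℕ) : ℤ) + 1 = ((b : ℕ) : ℤ) := by
            have : (k : ℕ) < (b : ℕ) := hkl
            omega
          have hkmem := hbmin k (le_trans (le_of_lt hkl) hb1) (by omega)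
          exact absurd hkl (not_lt.mpr hkmem)
        · simp only [if_neg hlb]
          by_cases hkb : k = b
          · rw [hkb] at hkl ⊢
            simp only [if_pos rfl, if_neg hlb]
            have := hα2 hkl
            omega
          · simp only [if_neg hkb]
            exact hα2 hkl
      · intro k l hkl
        rw [hγ k, hγ l]
        by_cases hlb : l = b
        · rw [hlb] at hkl ⊢
          have hkb : k ≠ b := ne_of_lt hkl
          simp only [if_neg hkb, if_pos rfl]
          have := hα3 k b hkl
          omega
        · simp only [if_neg hlb]
          by_cases hkb : k = b
          · rw [hkb] at hkl ⊢
            simp only [if_pos rfl, if_neg hlb]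
            by_cases hla : l ≤ a
            · have h1 := mono_gap hα2 l a hla
              have h3 : (l : ℕ) < m := l.isLt
              have h4 : (0 : ℤ) ≤ ((b : ℕ) : ℤ) := by positivity
              have h5 : ((l : ℕ) : ℤ) < (m : ℤ) := by exact_mod_cast h3
              omega
            · push_neg at hla
              have hβl : β l = α l := hamax l hla
              have h1 := hβ3 b l (lt_of_le_of_lt hb1 hla)
              omega
          · simp only [if_neg hkb]
            exact hα3 k l hkl
    have hβγ : β ≤ γ := by
      intro l
      rw [hγ l]
      split <;> rename_i h
      · subst h; exact hβb
      · exact hle l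
    have hγα : γ < α := by
      rw [lt_iff_le_and_ne]
      constructor
      · intro l
        rw [hγ l]
        split <;> rename_i h
        · subst h; linarith
        · exact le_refl _
      · intro h
        have := congrFun h b
        rw [hγ b, if_pos rfl] at this
        omega
    have hnotlt : ¬ β < γ := fun h => hcov γ hγIdx h hγα
    have hβeq : β = γ := by
      by_contra h
      exact hnotlt (lt_of_le_of_ne hβγ h)
    exact ⟨b, hβeq⟩
  · rintro ⟨a, rfl⟩
    set δ : Fin m → ℤ := α - Pi.single a 1 with hδ_def
    have hsub : ∀ l, δ l = if l = a then α a - 1 else α l := by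
      intro l
      simp only [hδ_def, Pi.sub_apply, Pi.single_apply]
      split <;> rename_i h
      · rw [h]
      · ring
    constructor
    · rw [lt_iff_le_and_ne]
      constructor
      · intro l
        rw [hsub l]
        split <;> rename_i h
        · subst h; linarith
        · exact le_refl _
      · intro h
        have := congrFun h a
        rw [hsub a, if_pos rfl] at this
        omega
    · intro γ hγI hbγ hγα
      have h1 : ∀ l, δ l ≤ γ l := fun l => hbγ.le l
      have h2 : ∀ l, γ l ≤ α l := fun l => hγα.le l
      have hoff : ∀ l, l ≠ a → γ l = α l := by
        intro l hl
        have := h1 l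
        rw [hsub l, if_neg hl] at this
        exact le_antisymm (h2 l) this
      have hbnd : α a - 1 ≤ γ a := by
        have := h1 a
        rwa [hsub a, if_pos rfl] at this
      rcases eq_or_lt_of_le hbnd with hcase | hcase
      · have : δ = γ := by
          funext l
          rw [hsub l]
          split <;> rename_i h
          · subst h; exact hcase
          · exact (hoff l h).symm
        exact absurd this hbγ.ne
      · have hγa : γ a = α a := by have := h2 a; omega
        have : γ = α := funext fun l => by
          by_cases h : l = a
          · subst h; exact hγa
          · exact hoff l h
        exact absurd this hγα.ne
end

section
/- Let f be an integer-valued function on m-tuples of integers satisfying: (i) f(α) = Σ_{a=1}^m f(α − e_a) for every α ∈ I(m,p) with α ≠ (1,2,…,m), where e_a is the a-th standard basis vector of ℤ^m; (ii) f(β) = 0 whenever β_k = β_l for some k ≠ l; (iii) f(β) = 0 whenever β_1 ≤ β_2 ≤ ⋯ ≤ β_m and β_m = β_1 + n; (iv) f(β) = 0 whenever 0 = β_1 < β_2 < ⋯ < β_m < n; (v) f((1,2,…,m)) = 1. Then f(α) = N(α) for every α ∈ I(m,p). In particular, the recurrence together with these boundary and initial conditions has a unique solution on I(m,p), namely the number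 of maximal chains below α. -/
/-- `I_α = {β ∈ I(m,p) : β ≤ α}`. -/
def Ibelow (n : ℕ) {m : ℕ} (α : Fin m → ℤ) : Set (Fin m → ℤ) :=
  {β | Idx n β ∧ β ≤ α}

/-- `C` is a maximal totally ordered subset (maximal chain) of `S`. -/
def IsMaxChainIn {V : Type*} [Preorder V] (S C : Set V) : Prop :=
  C ⊆ S ∧ IsChain (· ≤ ·) C ∧
    ∀ C' : Set V, C' ⊆ S → IsChain (· ≤ ·) C' → C ⊆ C' → C' = C

/-- `N(α)` : the number of maximal chains of `I_α = {β ∈ I(m,p) : β ≤ α}`. -/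
noncomputable def Ncha (n : ℕ) {m : ℕ} (α : Fin m → ℤ) : ℕ :=
  {C : Set (Fin m → ℤ) | IsMaxChainIn (Ibelow n α) C}.ncard

namespace Aux

variable {m n : ℕ}

def mintup (m : ℕ) : Fin m → ℤ := fun l : Fin m => (l : ℤ) + 1

lemma gap {β : Fin m → ℤ} (h : StrictMono β) :
    ∀ d : ℕ, ∀ k l : Fin m, (k : ℕ) + d = (l : ℕ) → β k + d ≤ β l := by
  intro d
  induction d with
  | zero =>
    intro k l hkl
    have : k = l := Fin.ext (by omega)
    simp [this]
  | succ d ih =>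
    intro k l hkl
    have hl : (k : ℕ) + d < m := by omega
    have h1 := ih k ⟨(k : ℕ) + d, hl⟩ rfl
    have h2 : β ⟨(k : ℕ) + d, hl⟩ < β l := h (by simp [Fin.lt_def]; omega)
    push_cast at h1 ⊢
    omega

lemma gap' {β : Fin m → ℤ} (h : StrictMono β) {k l : Fin m} (hkl : k ≤ l) :
    β k + ((l : ℕ) - (k : ℕ) : ℕ) ≤ β l :=
  gap h _ k l (by omega)

lemma lb {β : Fin m → ℤ} (hβ : Idx n β) (l : Fin m) : (l : ℤ) + 1 ≤ β l := by
  have h0 := gap hβ.2.1 (l : ℕ) ⟨0, l.pos⟩ l (by simp)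
  have h1 := hβ.1 ⟨0, l.pos⟩
  omega

lemma min_le {β : Fin m → ℤ} (hβ : Idx n β) : mintup m ≤ β := fun l => lb hβ l

lemma min_mem (hm : 0 < m) (hmn : m < n) : Idx n (mintup m) := by
  refine ⟨fun l => by simp [mintup], fun k l hkl => by
    simpa [mintup] using (by exact_mod_cast hkl : ((k:ℕ):ℤ) < (l:ℕ)), fun k l hkl => ?_⟩
  simp only [mintup]
  have := l.isLt
  have := k.isLt
  omega

lemma eq_min {β : Fin m → ℤ} (hβ : Idx n β) (h : β ≤ mintup m) : β = mintup m :=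
  funext fun l => le_antisymm (h l) (lb hβ l)

lemma Ibelow_min (hm : 0 < m) (hmn : m < n) : Ibelow n (mintup m) = {mintup m} := by
  ext β
  constructor
  · rintro ⟨h1, h2⟩; exact eq_min h1 h2
  · rintro rfl; exact ⟨min_mem hm hmn, le_refl _⟩

lemma finite_Ibelow (α : Fin m → ℤ) : (Ibelow n α).Finite := by
  apply Set.Finite.subset (Set.Finite.pi (fun l : Fin m => Set.finite_Icc ((l : ℤ) + 1) (α l)))
  rintro β ⟨h1, h2⟩
  exact fun l _ => ⟨lb h1 l, h2 l⟩

lemma between (hmn : m < n) {α β : Fin m → ℤ} (hα : Idx n α) (hβ : Idx n β)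
    (hle : β ≤ α) (hne : β ≠ α) :
    ∃ a : Fin m, Idx n (β + Pi.single a 1) ∧ β + Pi.single a 1 ≤ α := by
  classical
  set A := Finset.univ.filter (fun l : Fin m => β l < α l) with hA
  have hS : A.Nonempty := by
    by_contra h
    apply hne; funext l
    refine le_antisymm (hle l) ?_
    by_contra hl
    exact h ⟨l, by simp [hA]; omega⟩
  set a := A.min' hS with ha_def
  have ha : β a < α a := by
    have := A.min'_mem hS
    simp [hA] at this; exact this
  have hamin : ∀ k : Fin m, (k : ℕ) < (a : ℕ) → β k = α k := by
    intro k hk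
    by_contra h
    have hkA : k ∈ A := by simp [hA]; exact lt_of_le_of_ne (hle k) h
    have := A.min'_le k hkA
    rw [Fin.le_def] at this; omega
  set T := Finset.univ.filter (fun l : Fin m => a ≤ l ∧ β l = β a + (l : ℤ) - (a : ℤ)) with hT
  have hTne : T.Nonempty := ⟨a, by simp [hT]⟩
  set a' := T.max' hTne with ha'_def
  obtain ⟨-, haa', hval⟩ := Finset.mem_filter.mp (T.max'_mem hTne)
  rw [← ha'_def] at haa' hval
  have haa'n : (a : ℕ) ≤ (a' : ℕ) := Fin.le_def.mp haa'
  have hrun : ∀ k : Fin m, a ≤ k → k ≤ a' → β k = β a + (k : ℤ) - (a : ℤ) := by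
    intro k h1 h2
    have g1 := gap' hβ.2.1 h1
    have g2 := gap' hβ.2.1 h2
    have n1 : (a : ℕ) ≤ (k : ℕ) := Fin.le_def.mp h1
    have n2 : (k : ℕ) ≤ (a' : ℕ) := Fin.le_def.mp h2
    omega
  have hup : β a' + 1 ≤ α a' := by
    have g := gap' hα.2.1 haa'
    omega
  have hnext : ∀ l : Fin m, a' < l → β a' + 2 ≤ β l := by
    intro l hl
    have hln : (a' : ℕ) < (l : ℕ) := Fin.lt_def.mp hl
    have hlt : (a' : ℕ) + 1 < m := lt_of_le_of_lt hln l.isLt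
    set l' : Fin m := ⟨(a' : ℕ) + 1, hlt⟩ with hl'_def
    have h1 : β a' < β l' := hβ.2.1 (Fin.lt_def.mpr (by simp [hl'_def]))
    have h2 : β l' ≠ β a' + 1 := by
      intro he
      have hl'T : l' ∈ T := by
        rw [hT, Finset.mem_filter]
        refine ⟨Finset.mem_univ _, Fin.le_def.mpr (by simp [hl'_def]; omega), ?_⟩
        rw [he, hval]
        simp [hl'_def]
        push_cast
        ring
      have hle' := T.le_max' l' hl'T
      rw [← ha'_def, Fin.le_def] at hle'
      simp [hl'_def] at hle'
    have h3 : β l' ≤ β l := hβ.2.1.monotone (Fin.le_def.mpr (by simp [hl'_def]; omega))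
    omega
  have hγ : ∀ l : Fin m, ((β + Pi.single a' 1 : Fin m → ℤ)) l = β l + (if l = a' then 1 else 0) := by
    intro l; simp [Pi.single_apply]
  have hmono : StrictMono (β + Pi.single a' 1) := by
    intro k l hkl
    rw [hγ, hγ]
    rcases eq_or_ne k a' with rfl | hk
    · rcases eq_or_ne l a' with rfl | hl
      · exact absurd hkl (lt_irrefl _)
      · have := hnext l hkl
        simp [hl]; omega
    · rcases eq_or_ne l a' with rfl | hl
      · have := hβ.2.1 hkl
        simp [hk]; omega
      · have := hβ.2.1 hkl
        simp [hk, hl]; omega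
  refine ⟨a', ⟨⟨?_, hmono, ?_⟩, ?_⟩⟩
  · intro l
    rw [hγ]
    have := hβ.1 l
    split_ifs <;> omega
  · intro k l hkl
    rw [hγ, hγ]
    have hkln : (k : ℕ) < (l : ℕ) := Fin.lt_def.mp hkl
    rcases eq_or_ne l a' with rfl | hl
    · have hka' : k ≠ a' := fun h => by rw [h] at hkl; exact lt_irrefl _ hkl
      simp [hka']
      rcases lt_or_ge (k : ℕ) (a : ℕ) with hc | hc
      · have hk := hamin k hc
        have := hα.2.2 k a' hkl
        omega
      · have hk := hrun k (Fin.le_def.mpr hc) (le_of_lt hkl)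
        have := a'.isLt
        omega
    · have := hβ.2.2 k l hkl
      split_ifs <;> omega
  · intro l
    rw [hγ]
    rcases eq_or_ne l a' with rfl | hl
    · simp; omega
    · simp [hl]; exact hle l

lemma vanish (hm : 0 < m) (hmn : m < n) {α β : Fin m → ℤ} (hα : Idx n α) (a : Fin m)
    (hβdef : β = α - Pi.single a 1) (h : ¬ Idx n β) :
    (∃ k l : Fin m, k ≠ l ∧ β k = β l) ∨
    (Monotone β ∧ β ⟨m - 1, by omega⟩ = β ⟨0, by omega⟩ + n) ∨
    (β ⟨0, by omega⟩ = 0 ∧ StrictMono β ∧ β ⟨m - 1, by omega⟩ < n) := by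
  classical
  have hβ : ∀ l : Fin m, β l = α l - (if l = a then 1 else 0) := by
    intro l; rw [hβdef]; simp [Pi.single_apply]
  by_cases hrep : 0 < (a : ℕ) ∧ α ⟨(a : ℕ) - 1, by omega⟩ = α a - 1
  · left
    obtain ⟨hpos, heq⟩ := hrep
    refine ⟨⟨(a : ℕ) - 1, by omega⟩, a, ?_, ?_⟩
    · exact Fin.ne_of_val_ne (by simp; omega)
    · rw [hβ, hβ]
      have hne : (⟨(a : ℕ) - 1, by omega⟩ : Fin m) ≠ a := Fin.ne_of_val_ne (by simp; omega)
      simp [hne, heq]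
  · have hsm : StrictMono β := by
      intro k l hkl
      rw [hβ, hβ]
      have hkln : (k : ℕ) < (l : ℕ) := Fin.lt_def.mp hkl
      rcases eq_or_ne l a with heq | hl
      · have hka : k ≠ a := by rw [← heq]; exact ne_of_lt hkl
        have hkan : (k : ℕ) < (a : ℕ) := by rw [← heq]; exact hkln
        simp [heq, hka]
        rcases eq_or_ne (k : ℕ) ((a : ℕ) - 1) with hke | hke
        · have hk_eq : k = (⟨(a : ℕ) - 1, by omega⟩ : Fin m) := Fin.ext (by simp; omega)
          have hlt : α k < α a := by rw [← heq]; exact hα.2.1 hkl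
          rw [hk_eq] at hlt ⊢
          have : ¬ (α (⟨(a : ℕ) - 1, by omega⟩ : Fin m) = α a - 1) := by
            intro hc; exact hrep ⟨by omega, hc⟩
          omega
        · have hg := gap' hα.2.1 (le_of_lt hkl)
          have hg2 : α l = α a := by rw [heq]
          omega
      · rcases eq_or_ne k a with heq | hk
        · have hx := hα.2.1 hkl
          have hy : α k = α a := by rw [heq]
          simp [heq, hl]; omega
        · have := hα.2.1 hkl
          simp [hk, hl]; omega
    have hm1 : m - 1 < m := by omega
    have h0m : 0 < m := hm
    by_cases hsp : ∃ k l : Fin m, k < l ∧ (n : ℤ) ≤ β l - β k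
    · right; left
      obtain ⟨k, l, hkl, hnle⟩ := hsp
      have hm2 : 1 < m := by have := l.isLt; have := Fin.lt_def.mp hkl; omega
      have h1 : β ⟨0, h0m⟩ ≤ β k := hsm.monotone (Fin.le_def.mpr (by simp))
      have h2 : β l ≤ β ⟨m - 1, hm1⟩ := hsm.monotone (Fin.le_def.mpr (by
        simp; have := l.isLt; omega))
      have hfl2 : (⟨0, h0m⟩ : Fin m) < (⟨m - 1, hm1⟩ : Fin m) := by
        rw [Fin.lt_def]; simp; omega
      have h3 := hα.2.2 _ _ hfl2
      have h4 : β ⟨m - 1, hm1⟩ ≤ α ⟨m - 1, hm1⟩ := by rw [hβ]; split_ifs <;> omega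
      have h5 : α ⟨0, h0m⟩ - 1 ≤ β ⟨0, h0m⟩ := by rw [hβ]; split_ifs <;> omega
      refine ⟨hsm.monotone, ?_⟩
      show β ⟨m - 1, hm1⟩ = β ⟨0, h0m⟩ + n
      omega
    · push_neg at hsp
      have hpos : ¬ ∀ l, 1 ≤ β l := by
        intro hall
        exact h ⟨hall, hsm, fun k l hkl => by have := hsp k l hkl; omega⟩
      push_neg at hpos
      obtain ⟨l₀, hl₀⟩ := hpos
      have hla : l₀ = a := by
        by_contra hne
        have h1 : β l₀ = α l₀ := by rw [hβ]; simp [hne]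
        have h2 := hα.1 l₀
        omega
      rw [hla] at hl₀
      have hl₀' : β a = α a - 1 := by rw [hβ]; simp
      have hba : β a = 0 := by have := hα.1 a; omega
      have hαa : α a = 1 := by omega
      have hafst : a = (⟨0, h0m⟩ : Fin m) := by
        by_contra hne
        have h0a : (⟨0, h0m⟩ : Fin m) < a := by
          rw [Fin.lt_def]
          have : (a : ℕ) ≠ 0 := fun hc => hne (Fin.ext (by simp [hc]))
          simp; omega
        have hx := hα.2.1 h0a
        have hy := hα.1 (⟨0, h0m⟩ : Fin m)
        omega
      right; right
      have hba' : β ⟨0, h0m⟩ = 0 := by rw [← hafst]; exact hba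
      have hlast : β ⟨m - 1, hm1⟩ < n := by
        rcases eq_or_ne ((⟨0, h0m⟩ : Fin m) : Fin m) (⟨m - 1, hm1⟩ : Fin m) with hfl | hfl
        · rw [← hfl, hba']
          have : (0 : ℤ) < n := by exact_mod_cast Nat.pos_of_ne_zero (by omega)
          omega
        · have hfll : (⟨0, h0m⟩ : Fin m) < (⟨m - 1, hm1⟩ : Fin m) := by
            rw [Fin.lt_def]
            have : m ≠ 1 := fun hc => hfl (Fin.ext (by simp [hc]))
            simp; omega
          have hw := hsp _ _ hfll
          omega
      exact ⟨hba', hsm, hlast⟩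

lemma sub_apply (α : Fin m → ℤ) (a l : Fin m) :
    ((α - Pi.single a 1 : Fin m → ℤ)) l = α l - (if l = a then 1 else 0) := by
  simp [Pi.single_apply]

lemma le_app {f g : Fin m → ℤ} (h : f ≤ g) (l : Fin m) : f l ≤ g l := h l

lemma add_apply' (b : Fin m → ℤ) (a l : Fin m) :
    ((b + Pi.single a 1 : Fin m → ℤ)) l = b l + (if l = a then 1 else 0) := by
  simp [Pi.single_apply]

lemma sub_single_le (α : Fin m → ℤ) (a : Fin m) : α - Pi.single a 1 ≤ α := by
  intro l
  show (α - Pi.single a 1 : Fin m → ℤ) l ≤ α l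
  rw [sub_apply]
  split_ifs <;> omega

lemma top_not_mem_sub (α : Fin m → ℤ) (a : Fin m) : ¬ α ≤ α - Pi.single a 1 := by
  intro h
  have h2 := le_app h a
  rw [sub_apply] at h2
  simp at h2

lemma sandwich {α γ : Fin m → ℤ} {a : Fin m} (h1 : α - Pi.single a 1 ≤ γ) (h2 : γ ≤ α)
    (h3 : γ ≠ α) : γ = α - Pi.single a 1 := by
  have hne : γ a ≠ α a := by
    intro he
    apply h3
    funext l
    rcases eq_or_ne l a with rfl | hl
    · exact he
    · have hx := le_app h1 l
      rw [sub_apply] at hx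
      simp [hl] at hx
      exact le_antisymm (le_app h2 l) hx
  funext l
  have ha := le_app h1 l
  have hb := le_app h2 l
  rw [sub_apply] at ha ⊢
  split_ifs at ha ⊢ with hc
  · subst hc; omega
  · omega

lemma top_mem {α : Fin m → ℤ} (hα : Idx n α) {C : Set (Fin m → ℤ)}
    (hC : IsMaxChainIn (Ibelow n α) C) : α ∈ C := by
  have hsub : insert α C ⊆ Ibelow n α := by
    rintro x (rfl | hx)
    · exact ⟨hα, le_refl _⟩
    · exact hC.1 hx
  have hch : IsChain (· ≤ ·) (insert α C) := by
    apply hC.2.1.insert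
    intro b hb _
    exact Or.inr (hC.1 hb).2
  have := hC.2.2 _ hsub hch (Set.subset_insert _ _)
  rw [← this]; exact Set.mem_insert _ _

lemma bot_mem (hm : 0 < m) (hmn : m < n) {α : Fin m → ℤ} (hα : Idx n α)
    {C : Set (Fin m → ℤ)} (hC : IsMaxChainIn (Ibelow n α) C) : mintup m ∈ C := by
  have hsub : insert (mintup m) C ⊆ Ibelow n α := by
    rintro x (rfl | hx)
    · exact ⟨min_mem hm hmn, min_le hα⟩
    · exact hC.1 hx
  have hch : IsChain (· ≤ ·) (insert (mintup m) C) := by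
    apply hC.2.1.insert
    intro b hb _
    exact Or.inl (min_le (hC.1 hb).1)
  have := hC.2.2 _ hsub hch (Set.subset_insert _ _)
  rw [← this]; exact Set.mem_insert _ _

lemma MC_min (hm : 0 < m) (hmn : m < n) :
    {C : Set (Fin m → ℤ) | IsMaxChainIn (Ibelow n (mintup m)) C} = {{mintup m}} := by
  ext C
  constructor
  · intro hC
    have hs := hC.1
    rw [Ibelow_min hm hmn] at hs
    have hmem : mintup m ∈ C := top_mem (min_mem hm hmn) hC
    exact Set.Subset.antisymm hs (Set.singleton_subset_iff.mpr hmem)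
  · rintro rfl
    refine ⟨by rw [Ibelow_min hm hmn], Set.subsingleton_singleton.isChain, ?_⟩
    intro C' h1 h2 h3
    rw [Ibelow_min hm hmn] at h1
    exact Set.Subset.antisymm h1 h3

lemma chain_max {C : Set (Fin m → ℤ)} (hfin : C.Finite) (hne : C.Nonempty)
    (hch : IsChain (· ≤ ·) C) : ∃ b ∈ C, ∀ x ∈ C, x ≤ b := by
  obtain ⟨b, hb, hmax⟩ := Set.Finite.exists_maximalFor id C hfin hne
  refine ⟨b, hb, fun x hx => ?_⟩
  rcases eq_or_ne x b with rfl | hxb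
  · exact le_refl _
  · rcases hch hx hb hxb with h | h
    · exact h
    · exact hmax hx h

lemma MC_finite (α : Fin m → ℤ) :
    {C : Set (Fin m → ℤ) | IsMaxChainIn (Ibelow n α) C}.Finite :=
  Set.Finite.subset (Set.Finite.finite_subsets (finite_Ibelow (n := n) α)) fun _ hC => hC.1

lemma decomp (hm : 0 < m) (hmn : m < n) {α : Fin m → ℤ} (hα : Idx n α)
    (hne : α ≠ mintup m) {C : Set (Fin m → ℤ)} (hC : IsMaxChainIn (Ibelow n α) C) :
    ∃ a : Fin m, Idx n (α - Pi.single a 1) ∧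
      IsMaxChainIn (Ibelow n (α - Pi.single a 1)) (C \ {α}) ∧ C = insert α (C \ {α}) := by
  have hαC : α ∈ C := top_mem hα hC
  have hminC : mintup m ∈ C := bot_mem hm hmn hα hC
  have hne' : (C \ {α}).Nonempty := ⟨mintup m, hminC, fun h => hne (Set.mem_singleton_iff.mp h).symm⟩
  have hfin' : (C \ {α}).Finite := ((finite_Ibelow (n := n) α).subset hC.1).subset Set.diff_subset
  have hch' : IsChain (· ≤ ·) (C \ {α}) := hC.2.1.mono Set.diff_subset
  obtain ⟨b, hbC', hbmax⟩ := chain_max hfin' hne' hch'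
  have hbmem : Idx n b ∧ b ≤ α := hC.1 hbC'.1
  have hbne : b ≠ α := hbC'.2
  obtain ⟨a, hγI, hγle⟩ := between hmn hα hbmem.1 hbmem.2 hbne
  have hbγ : b ≤ b + Pi.single a 1 := by
    intro l
    show b l ≤ (b + Pi.single a 1 : Fin m → ℤ) l
    rw [add_apply']
    split_ifs <;> omega
  have heq : b + Pi.single a 1 = α := by
    by_contra hneq
    have hγa : (b + Pi.single a 1 : Fin m → ℤ) a = b a + 1 := by simp
    have hγnC : b + Pi.single a 1 ∉ C := by
      intro hmem
      have hinC' : b + Pi.single a 1 ∈ C \ {α} := ⟨hmem, hneq⟩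
      have hcon := le_app (hbmax _ hinC') a
      rw [add_apply'] at hcon
      simp at hcon
    have hsub : insert (b + Pi.single a 1) C ⊆ Ibelow n α := by
      rintro x (rfl | hx)
      · exact ⟨hγI, hγle⟩
      · exact hC.1 hx
    have hch2 : IsChain (· ≤ ·) (insert (b + Pi.single a 1) C) := by
      apply hC.2.1.insert
      intro x hx hxne
      rcases eq_or_ne x α with rfl | hxα
      · exact Or.inl hγle
      · exact Or.inr (le_trans (hbmax x ⟨hx, hxα⟩) hbγ)
    have := hC.2.2 _ hsub hch2 (Set.subset_insert _ _)
    exact hγnC (by rw [← this]; exact Set.mem_insert _ _)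
  have hbeq : b = α - Pi.single a 1 := by rw [← heq]; ring
  have haI : Idx n (α - Pi.single a 1) := by rw [← hbeq]; exact hbmem.1
  refine ⟨a, haI, ⟨?_, hch', ?_⟩, ?_⟩
  · intro x hx
    refine ⟨(hC.1 hx.1).1, ?_⟩
    rw [← hbeq]
    exact hbmax x hx
  · intro D hD1 hD2 hD3
    have hsubD : insert α D ⊆ Ibelow n α := by
      rintro x (rfl | hx)
      · exact ⟨hα, le_refl _⟩
      · exact ⟨(hD1 hx).1, le_trans (hD1 hx).2 (sub_single_le α a)⟩
    have hchD : IsChain (· ≤ ·) (insert α D) := by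
      apply hD2.insert
      intro x hx _
      exact Or.inr (le_trans (hD1 hx).2 (sub_single_le α a))
    have hCins : C ⊆ insert α D := by
      intro x hx
      rcases eq_or_ne x α with rfl | hxα
      · exact Set.mem_insert _ _
      · exact Set.mem_insert_of_mem _ (hD3 ⟨hx, hxα⟩)
    have hiD := hC.2.2 _ hsubD hchD hCins
    have hαnD : α ∉ D := by
      intro hmem
      exact top_not_mem_sub α a (hD1 hmem).2
    apply Set.Subset.antisymm
    · intro x hx
      have hxC : x ∈ C := by rw [← hiD]; exact Set.mem_insert_of_mem _ hx
      refine ⟨hxC, fun hxα => hαnD ?_⟩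
      rw [← Set.mem_singleton_iff.mp hxα]
      exact hx
    · exact hD3
  · rw [Set.insert_diff_singleton, Set.insert_eq_self.mpr hαC]

lemma recomp (hmn : m < n) {α : Fin m → ℤ} (hα : Idx n α) {a : Fin m}
    (haI : Idx n (α - Pi.single a 1)) {C' : Set (Fin m → ℤ)}
    (hC' : IsMaxChainIn (Ibelow n (α - Pi.single a 1)) C') :
    IsMaxChainIn (Ibelow n α) (insert α C') := by
  have hsub : ∀ x ∈ C', x ≤ α - Pi.single a 1 := fun x hx => (hC'.1 hx).2
  refine ⟨?_, ?_, ?_⟩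
  · rintro x (rfl | hx)
    · exact ⟨hα, le_refl _⟩
    · exact ⟨(hC'.1 hx).1, le_trans (hsub x hx) (sub_single_le α a)⟩
  · apply hC'.2.1.insert
    intro x hx _
    exact Or.inr (le_trans (hsub x hx) (sub_single_le α a))
  · intro D hD1 hD2 hD3
    have htop : α - Pi.single a 1 ∈ C' := top_mem haI hC'
    have htopD : α - Pi.single a 1 ∈ D := hD3 (Set.mem_insert_of_mem _ htop)
    have hαD : α ∈ D := hD3 (Set.mem_insert _ _)
    have hsubD : D \ {α} ⊆ Ibelow n (α - Pi.single a 1) := by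
      rintro x ⟨hx, hxα⟩
      have hxα' : x ≠ α := hxα
      refine ⟨(hD1 hx).1, ?_⟩
      rcases eq_or_ne x (α - Pi.single a 1) with rfl | hxe
      · exact le_refl _
      · rcases hD2 hx htopD hxe with h | h
        · exact h
        · exact le_of_eq (sandwich h (hD1 hx).2 hxα')
    have hC'sub : C' ⊆ D \ {α} := by
      intro x hx
      refine ⟨hD3 (Set.mem_insert_of_mem _ hx), fun hxα => ?_⟩
      rw [Set.mem_singleton_iff] at hxα
      rw [hxα] at hx
      exact top_not_mem_sub α a (hC'.1 hx).2
    have hDC : D \ {α} = C' := hC'.2.2 _ hsubD (hD2.mono Set.diff_subset) hC'sub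
    rw [← hDC, Set.insert_diff_singleton, Set.insert_eq_self.mpr hαD]

lemma ncard_biUnion_eq {X ι : Type*} [DecidableEq ι] (s : Finset ι) (t : ι → Set X)
    (hfin : ∀ i ∈ s, (t i).Finite)
    (hdisj : ∀ i ∈ s, ∀ j ∈ s, i ≠ j → Disjoint (t i) (t j)) :
    (⋃ i ∈ s, t i).ncard = ∑ i ∈ s, (t i).ncard := by
  induction s using Finset.induction_on with
  | empty => simp
  | insert a s ha ih =>
    rw [Finset.set_biUnion_insert, Finset.sum_insert ha]
    have hUfin : (⋃ i ∈ s, t i).Finite := by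
      apply Set.Finite.biUnion (s.finite_toSet)
      intro i hi
      exact hfin i (Finset.mem_insert_of_mem hi)
    have hdisj2 : Disjoint (t a) (⋃ i ∈ s, t i) := by
      rw [Set.disjoint_iUnion_right]
      intro i
      rw [Set.disjoint_iUnion_right]
      intro hi
      exact hdisj a (Finset.mem_insert_self a s) i (Finset.mem_insert_of_mem hi)
        (fun h => ha (h ▸ hi))
    rw [Set.ncard_union_eq hdisj2 (hfin a (Finset.mem_insert_self a s)) hUfin]
    rw [ih (fun i hi => hfin i (Finset.mem_insert_of_mem hi))
      (fun i hi j hj hij => hdisj i (Finset.mem_insert_of_mem hi) j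
        (Finset.mem_insert_of_mem hj) hij)]

open Classical in
lemma ncha_rec (hm : 0 < m) (hmn : m < n) {α : Fin m → ℤ} (hα : Idx n α)
    (hne : α ≠ mintup m) :
    (Ncha n α : ℤ) = ∑ a : Fin m,
      (if Idx n (α - Pi.single a 1) then (Ncha n (α - Pi.single a 1) : ℤ) else 0) := by
  set A : Finset (Fin m) := Finset.univ.filter (fun a => Idx n (α - Pi.single a 1)) with hA
  set t : Fin m → Set (Set (Fin m → ℤ)) :=
    fun a => (insert α) '' {C | IsMaxChainIn (Ibelow n (α - Pi.single a 1)) C} with ht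
  have hAI : ∀ a ∈ A, Idx n (α - Pi.single a 1) := by
    intro a haA; rw [hA, Finset.mem_filter] at haA; exact haA.2
  have hcover : {C : Set (Fin m → ℤ) | IsMaxChainIn (Ibelow n α) C} = ⋃ a ∈ A, t a := by
    ext C
    simp only [Set.mem_iUnion, Set.mem_setOf_eq, ht, Set.mem_image]
    constructor
    · intro hC
      obtain ⟨a, haI, hC', hCeq⟩ := decomp hm hmn hα hne hC
      refine ⟨a, by rw [hA, Finset.mem_filter]; exact ⟨Finset.mem_univ _, haI⟩,
        C \ {α}, hC', hCeq.symm⟩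
    · rintro ⟨a, haA, C', hC', rfl⟩
      exact recomp hmn hα (hAI a haA) hC'
  have hnotmem : ∀ a : Fin m, Idx n (α - Pi.single a 1) →
      ∀ C' ∈ {C : Set (Fin m → ℤ) | IsMaxChainIn (Ibelow n (α - Pi.single a 1)) C},
        α ∉ C' := by
    intro a haI C' hC' hmem
    exact top_not_mem_sub α a (hC'.1 hmem).2
  have hcard : ∀ a ∈ A, (t a).ncard = Ncha n (α - Pi.single a 1) := by
    intro a haA
    rw [ht]
    apply Set.ncard_image_of_injOn
    intro C1 h1 C2 h2 he
    have e1 : C1 = insert α C1 \ {α} :=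
      (Set.insert_diff_self_of_notMem (hnotmem a (hAI a haA) C1 h1)).symm
    have e2 : C2 = insert α C2 \ {α} :=
      (Set.insert_diff_self_of_notMem (hnotmem a (hAI a haA) C2 h2)).symm
    rw [e1, e2, he]
  have hfin : ∀ a ∈ A, (t a).Finite := by
    intro a _
    exact (MC_finite (n := n) (α - Pi.single a 1)).image _
  have hdisj : ∀ a ∈ A, ∀ b ∈ A, a ≠ b → Disjoint (t a) (t b) := by
    intro a haA b hbA hab
    rw [Set.disjoint_left]
    rintro C ⟨C1, h1, rfl⟩ ⟨C2, h2, he⟩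
    have htop1 : α - Pi.single a 1 ∈ C1 := top_mem (hAI a haA) h1
    have hm1 : α - Pi.single a 1 ∈ insert α C2 := by rw [he]; exact Set.mem_insert_of_mem _ htop1
    have hne1 : α - Pi.single a 1 ≠ α := by
      intro hcon
      exact top_not_mem_sub α a (le_of_eq hcon.symm)
    rcases hm1 with hcon | hmem
    · exact hne1 hcon
    · have hle := (h2.1 hmem).2
      have := le_app hle b
      rw [sub_apply, sub_apply] at this
      have hab' : b ≠ a := fun h => hab h.symm
      simp [hab'] at this
  have : Ncha n α = ∑ a ∈ A, Ncha n (α - Pi.single a 1) := by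
    rw [Ncha, hcover, ncard_biUnion_eq A t hfin hdisj]
    exact Finset.sum_congr rfl hcard
  rw [this]
  push_cast
  rw [hA, Finset.sum_filter]

lemma msr_sub (α : Fin m → ℤ) (a : Fin m) :
    (∑ l, (((α - Pi.single a 1 : Fin m → ℤ)) l - ((l : ℤ) + 1))) =
      (∑ l, (α l - ((l : ℤ) + 1))) - 1 := by
  have h : ∀ l : Fin m, ((α - Pi.single a 1 : Fin m → ℤ)) l - ((l : ℤ) + 1) =
      (α l - ((l : ℤ) + 1)) - (if l = a then 1 else 0) := by
    intro l; rw [sub_apply]; ring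
  rw [Finset.sum_congr rfl (fun l _ => h l), Finset.sum_sub_distrib]
  congr 1
  simp

lemma msr_zero {β : Fin m → ℤ} (hβ : Idx n β) (h : (∑ l, (β l - ((l : ℤ) + 1))) = 0) :
    β = mintup m := by
  have hnn : ∀ l ∈ Finset.univ, (0 : ℤ) ≤ β l - ((l : ℤ) + 1) := by
    intro l _
    have := lb hβ l
    omega
  have := (Finset.sum_eq_zero_iff_of_nonneg hnn).mp h
  funext l
  have h2 := this l (Finset.mem_univ l)
  show β l = (l : ℤ) + 1
  omega

lemma msr_nonneg {β : Fin m → ℤ} (hβ : Idx n β) : 0 ≤ ∑ l, (β l - ((l : ℤ) + 1)) :=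
  Finset.sum_nonneg fun l _ => by have := lb hβ l; omega

end Aux

/-- The Pieri recurrence together with the boundary conditions (vanishing on
tuples with a repeated entry, on weakly increasing tuples with
`β_m = β_1 + n`, and on strictly increasing tuples `0 = β_1 < ⋯ < β_m < n`)
and the initial condition `f(1,…,m) = 1` determines `f` uniquely on `I(m,p)`:
its value is the number `N(α)` of maximal chains below `α`. -/
theorem stmt5 (m p : ℕ) (hm : 1 ≤ m) (hp : 1 ≤ p) (n : ℕ) (hn : n = m + p)
    (f : (Fin m → ℤ) → ℤ)
    (hrec : ∀ α : Fin m → ℤ, Idx n α → α ≠ (fun l : Fin m => (l : ℤ) + 1) →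
      f α = ∑ a : Fin m, f (α - Pi.single a 1))
    (hbound1 : ∀ β : Fin m → ℤ, (∃ k l : Fin m, k ≠ l ∧ β k = β l) → f β = 0)
    (hbound2 : ∀ β : Fin m → ℤ, Monotone β →
      β ⟨m - 1, by omega⟩ = β ⟨0, by omega⟩ + n → f β = 0)
    (hini2 : ∀ β : Fin m → ℤ, β ⟨0, by omega⟩ = 0 → StrictMono β →
      β ⟨m - 1, by omega⟩ < n → f β = 0)
    (hini1 : f (fun l : Fin m => (l : ℤ) + 1) = 1) :
    ∀ α : Fin m → ℤ, Idx n α → f α = (Ncha n α : ℤ) := by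
  have hm0 : 0 < m := hm
  have hmn : m < n := by omega
  suffices key : ∀ k : ℕ, ∀ α : Fin m → ℤ, Idx n α →
      (∑ l, (α l - ((l : ℤ) + 1))).toNat = k → f α = (Ncha n α : ℤ) by
    intro α hα
    exact key _ α hα rfl
  intro k
  induction k using Nat.strong_induction_on with
  | _ k IH =>
  intro α hα hk
  by_cases hmin : α = Aux.mintup m
  · rw [hmin]
    have h1 : f (Aux.mintup m) = 1 := hini1
    have h2 : Ncha n (Aux.mintup m) = 1 := by
      rw [Ncha, Aux.MC_min hm0 hmn]
      exact Set.ncard_singleton _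
    rw [h1, h2]
    norm_num
  · rw [hrec α hα hmin]
    rw [Aux.ncha_rec hm0 hmn hα hmin]
    apply Finset.sum_congr rfl
    intro a _
    by_cases haI : Idx n (α - Pi.single a 1)
    · rw [if_pos haI]
      have hs1 := Aux.msr_sub α a
      have hs0 := Aux.msr_nonneg (n := n) hα
      have hne0 : (∑ l, (α l - ((l : ℤ) + 1))) ≠ 0 := by
        intro hc
        exact hmin (Aux.msr_zero hα hc)
      have hlt : (∑ l, (((α - Pi.single a 1 : Fin m → ℤ)) l - ((l : ℤ) + 1))).toNat < k := by
        rw [hs1]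
        omega
      exact IH _ hlt _ haI rfl
    · rw [if_neg haI]
      rcases Aux.vanish hm0 hmn hα a rfl haI with h1 | h2 | h3
      · exact hbound1 _ h1
      · exact hbound2 _ h2.1 h2.2
      · exact hini2 _ h3.1 h3.2.1 h3.2.2
end

section
/- The assignment (i, d) ↦ (i;d) is a bijection from the set of pairs (i, d), where i = (i_1,…,i_m) is an integer tuple with 1 ≤ i_1 < ⋯ < i_m ≤ n and d ≥ 0 is an integer, onto I(m,p). Moreover Σ_{l=1}^m ((i;d)_l − l) = nd + Σ_{j=1}^m (i_j − j). -/
/-- `1 ≤ i_1 < ⋯ < i_m ≤ n`. -/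
def IdxGr (n : ℕ) {m : ℕ} (i : Fin m → ℤ) : Prop :=
  (∀ l, 1 ≤ i l) ∧ StrictMono i ∧ ∀ l, i l ≤ n

/-- The index `(i;d)` : writing `d = k*m + r` with `0 ≤ r < m`,
`(i;d)_l = k*n + i_{l+r}` for `l ≤ m - r` and `(i;d)_l = (k+1)*n + i_{l-m+r}`
for `l > m - r` (zero-based indexing here). -/
def semi (n : ℕ) {m : ℕ} (i : Fin m → ℤ) (d : ℕ) : Fin m → ℤ := fun l =>
  if h : (l : ℕ) + d % m < m then
    (d / m : ℤ) * n + i ⟨(l : ℕ) + d % m, h⟩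
  else
    ((d / m : ℤ) + 1) * n +
      i ⟨(l : ℕ) + d % m - m, by
        have hl := l.2
        have hmod : d % m < m := Nat.mod_lt d (by omega)
        omega⟩

lemma semi_eq (n : ℕ) {m : ℕ} (i : Fin m → ℤ) (k r : ℕ) (hr : r < m) (l : Fin m) :
    semi n i (k * m + r) l =
      if h : (l : ℕ) + r < m then (k : ℤ) * n + i ⟨(l : ℕ) + r, h⟩
      else ((k : ℤ) + 1) * n + i ⟨(l : ℕ) + r - m, by omega⟩ := by
  have hmod : (k * m + r) % m = r := by
    rw [Nat.add_comm (k*m) r, Nat.add_mul_mod_self_right, Nat.mod_eq_of_lt hr]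
  have hdiv : ((k * m + r : ℕ) : ℤ) / (m : ℤ) = (k : ℤ) := by
    push_cast
    rw [add_comm, Int.add_mul_ediv_right _ _ (by exact_mod_cast (by omega : (0:ℤ) < m).ne')]
    rw [Int.ediv_eq_zero_of_lt (by positivity) (by exact_mod_cast hr), zero_add]
  simp only [semi, hmod, hdiv]

lemma semi_zero (n : ℕ) {m : ℕ} (i : Fin m → ℤ) : semi n i 0 = i := by
  funext l
  simp [semi, l.isLt]

def cyc {m : ℕ} (hm : 0 < m) (l : Fin m) : Fin m :=
  if h : (l : ℕ) + 1 < m then ⟨(l : ℕ) + 1, h⟩ else ⟨0, hm⟩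

lemma cyc_bij {m : ℕ} (hm : 0 < m) : Function.Bijective (cyc hm) := by
  rw [Fintype.bijective_iff_injective_and_card]
  refine ⟨fun a b hab => ?_, rfl⟩
  unfold cyc at hab
  have ha := a.isLt; have hb := b.isLt
  split_ifs at hab <;> simp only [Fin.mk.injEq] at hab <;> (ext; omega)

lemma semi_succ (n : ℕ) {m : ℕ} (hm : 0 < m) (i : Fin m → ℤ) (d : ℕ) (l : Fin m) :
    semi n i (d + 1) l =
      semi n i d (cyc hm l) + (if (l : ℕ) + 1 = m then (n : ℤ) else 0) := by
  obtain ⟨k, r, hr, rfl⟩ : ∃ k r, r < m ∧ d = k * m + r :=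
    ⟨d / m, d % m, Nat.mod_lt d hm, (Nat.div_add_mod' d m).symm⟩
  have key : ∀ (a b : ℕ) (ha : a < m) (hb : b < m), a = b →
      i ⟨a, ha⟩ = i ⟨b, hb⟩ := by rintro a b ha hb rfl; rfl
  have hl := l.isLt
  rcases Nat.lt_or_ge (r + 1) m with hr1 | hr1
  · have he : k * m + r + 1 = k * m + (r + 1) := by ring
    rw [he, semi_eq n i k (r+1) hr1, semi_eq n i k r hr]
    rcases Nat.lt_or_ge ((l : ℕ) + 1) m with h1 | h1
    · have hc : cyc hm l = ⟨(l : ℕ) + 1, h1⟩ := dif_pos h1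
      have hv : ((⟨(l : ℕ) + 1, h1⟩ : Fin m) : ℕ) = (l : ℕ) + 1 := rfl
      rw [hc, if_neg (by omega)]
      rcases Nat.lt_or_ge ((l : ℕ) + (r + 1)) m with h2 | h2
      · rw [dif_pos h2, dif_pos (by omega : ((⟨(l:ℕ)+1, h1⟩ : Fin m) : ℕ) + r < m)]
        have e1 := key ((l : ℕ) + (r + 1)) (((⟨(l:ℕ)+1, h1⟩ : Fin m) : ℕ) + r) h2 (by omega) (by omega)
        linear_combination e1
      · rw [dif_neg (by omega), dif_neg (by omega : ¬ ((⟨(l:ℕ)+1, h1⟩ : Fin m) : ℕ) + r < m)]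
        have e1 := key ((l : ℕ) + (r + 1) - m) (((⟨(l:ℕ)+1, h1⟩ : Fin m) : ℕ) + r - m)
          (by omega) (by omega) (by omega)
        linear_combination e1
    · have hlm : (l : ℕ) + 1 = m := by omega
      have hc : cyc hm l = ⟨0, hm⟩ := dif_neg (by omega)
      have hv : ((⟨0, hm⟩ : Fin m) : ℕ) = 0 := rfl
      rw [hc, if_pos hlm, dif_neg (by omega), dif_pos (by omega : ((⟨0, hm⟩ : Fin m) : ℕ) + r < m)]
      have e1 := key ((l : ℕ) + (r + 1) - m) (((⟨0, hm⟩ : Fin m) : ℕ) + r) (by omega) (by omega) (by omega)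
      linear_combination e1
  · have hrm : r + 1 = m := by omega
    have he : k * m + r + 1 = (k + 1) * m + 0 := by rw [add_mul, one_mul]; omega
    rw [he, semi_eq n i (k+1) 0 hm, semi_eq n i k r hr]
    rcases Nat.lt_or_ge ((l : ℕ) + 1) m with h1 | h1
    · have hc : cyc hm l = ⟨(l : ℕ) + 1, h1⟩ := dif_pos h1
      have hv : ((⟨(l : ℕ) + 1, h1⟩ : Fin m) : ℕ) = (l : ℕ) + 1 := rfl
      rw [hc, if_neg (by omega), dif_pos (by omega : (l : ℕ) + 0 < m),
        dif_neg (by omega : ¬ ((⟨(l:ℕ)+1, h1⟩ : Fin m) : ℕ) + r < m)]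
      have e1 := key ((l : ℕ) + 0) (((⟨(l:ℕ)+1, h1⟩ : Fin m) : ℕ) + r - m) (by omega) (by omega) (by omega)
      push_cast
      linear_combination e1
    · have hlm : (l : ℕ) + 1 = m := by omega
      have hc : cyc hm l = ⟨0, hm⟩ := dif_neg (by omega)
      have hv : ((⟨0, hm⟩ : Fin m) : ℕ) = 0 := rfl
      rw [hc, if_pos hlm, dif_pos (by omega : (l : ℕ) + 0 < m),
        dif_pos (by omega : ((⟨0, hm⟩ : Fin m) : ℕ) + r < m)]
      have e1 := key ((l : ℕ) + 0) (((⟨0, hm⟩ : Fin m) : ℕ) + r) (by omega) (by omega) (by omega)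
      push_cast
      linear_combination e1

lemma semi_sum (n : ℕ) {m : ℕ} (hm : 0 < m) (i : Fin m → ℤ) (d : ℕ) :
    ∑ l : Fin m, semi n i d l = (n : ℤ) * d + ∑ j : Fin m, i j := by
  induction d with
  | zero => simp [semi_zero]
  | succ d ih =>
    rw [Finset.sum_congr rfl (fun l _ => semi_succ n hm i d l), Finset.sum_add_distrib,
      Function.Bijective.sum_comp (cyc_bij hm) (semi n i d), ih]
    have hs : ∑ l : Fin m, (if (l : ℕ) + 1 = m then (n : ℤ) else 0) = n := by
      rw [Finset.sum_eq_single (⟨m - 1, by omega⟩ : Fin m)]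
      · rw [if_pos (by simp; omega)]
      · intro b _ hb
        rw [if_neg (fun h => hb (by ext; simp; omega))]
      · intro h; exact absurd (Finset.mem_univ _) h
    rw [hs]
    push_cast
    ring

lemma semi_lo (n : ℕ) {m : ℕ} (i : Fin m → ℤ) (k r : ℕ) (hr : r < m) (l : Fin m)
    (h : (l : ℕ) + r < m) : semi n i (k * m + r) l = (k : ℤ) * n + i ⟨(l : ℕ) + r, h⟩ := by
  rw [semi_eq n i k r hr]; exact dif_pos h

lemma semi_hi (n : ℕ) {m : ℕ} (i : Fin m → ℤ) (k r : ℕ) (hr : r < m) (l : Fin m)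
    (h : ¬ ((l : ℕ) + r < m)) :
    semi n i (k * m + r) l = ((k : ℤ) + 1) * n + i ⟨(l : ℕ) + r - m, by have := l.isLt; omega⟩ := by
  rw [semi_eq n i k r hr]; exact dif_neg h

lemma semi_idx (m p : ℕ) (hm : 1 ≤ m) (hp : 1 ≤ p) (n : ℕ) (hn : n = m + p)
    (i : Fin m → ℤ) (hi : IdxGr n i) (d : ℕ) : Idx n (semi n i d) := by
  obtain ⟨h1, h2, h3⟩ := hi
  obtain ⟨k, r, hr, rfl⟩ : ∃ k r, r < m ∧ d = k * m + r :=
    ⟨d / m, d % m, Nat.mod_lt d (by omega), (Nat.div_add_mod' d m).symm⟩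
  have hn1 : (1 : ℤ) ≤ n := by exact_mod_cast (by omega : 1 ≤ n)
  have hkn : (0 : ℤ) ≤ (k : ℤ) * n := by positivity
  have mono : ∀ (a b : ℕ) (ha : a < m) (hb : b < m), a < b →
      i ⟨a, ha⟩ < i ⟨b, hb⟩ := fun a b ha hb h => h2 (by simp [Fin.lt_def]; omega)
  refine ⟨fun l => ?_, fun a b hab => ?_, fun a b hab => ?_⟩
  · rw [semi_eq n i k r hr]
    split_ifs with h
    · have := h1 ⟨(l : ℕ) + r, h⟩; linarith
    · have := h1 ⟨(l : ℕ) + r - m, by omega⟩; nlinarith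
  · have hab' : (a : ℕ) < (b : ℕ) := hab
    have hbm := b.isLt
    rw [semi_eq n i k r hr a, semi_eq n i k r hr b]
    split_ifs with ha hb hb
    · have := mono ((a : ℕ) + r) ((b : ℕ) + r) ha hb (by omega); linarith
    · have u1 := h3 ⟨(a : ℕ) + r, ha⟩
      have u2 := h1 ⟨(b : ℕ) + r - m, by omega⟩
      linarith
    · omega
    · have := mono ((a : ℕ) + r - m) ((b : ℕ) + r - m) (by omega) (by omega) (by omega); linarith
  · have hab' : (a : ℕ) < (b : ℕ) := hab
    have hbm := b.isLt
    rw [semi_eq n i k r hr a, semi_eq n i k r hr b]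
    split_ifs with hb ha ha
    · have u1 := h1 ⟨(a : ℕ) + r, ha⟩
      have u2 := h3 ⟨(b : ℕ) + r, hb⟩
      linarith
    · omega
    · have := mono ((b : ℕ) + r - m) ((a : ℕ) + r) (by omega) ha (by omega); linarith
    · have u1 := h1 ⟨(a : ℕ) + r - m, by omega⟩
      have u2 := h3 ⟨(b : ℕ) + r - m, by omega⟩
      linarith

lemma semi_inj (m p : ℕ) (hm : 1 ≤ m) (hp : 1 ≤ p) (n : ℕ) (hn : n = m + p)
    (i i' : Fin m → ℤ) (d d' : ℕ) (hi : IdxGr n i) (hi' : IdxGr n i')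
    (hsem : semi n i d = semi n i' d') : i = i' ∧ d = d' := by
  obtain ⟨h1, h2, h3⟩ := hi
  obtain ⟨h1', h2', h3'⟩ := hi'
  obtain ⟨k, r, hr, rfl⟩ : ∃ k r, r < m ∧ d = k * m + r :=
    ⟨d / m, d % m, Nat.mod_lt d (by omega), (Nat.div_add_mod' d m).symm⟩
  obtain ⟨k', r', hr', rfl⟩ : ∃ k r, r < m ∧ d' = k * m + r :=
    ⟨d' / m, d' % m, Nat.mod_lt d' (by omega), (Nat.div_add_mod' d' m).symm⟩
  have hn1 : (1 : ℤ) ≤ n := by exact_mod_cast (by omega : 1 ≤ n)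
  -- step 1 : k = k'
  have hk : k = k' := by
    obtain ⟨l0, hl0⟩ : ∃ l0 : Fin m, (l0 : ℕ) = 0 := ⟨⟨0, by omega⟩, rfl⟩
    have h0 := congrFun hsem l0
    rw [semi_lo n i k r hr l0 (by omega), semi_lo n i' k' r' hr' l0 (by omega)] at h0
    have b1 := h1 ⟨(l0 : ℕ) + r, by omega⟩
    have b2 := h3 ⟨(l0 : ℕ) + r, by omega⟩
    have b1' := h1' ⟨(l0 : ℕ) + r', by omega⟩
    have b2' := h3' ⟨(l0 : ℕ) + r', by omega⟩
    have hcast : (k : ℤ) = (k' : ℤ) := by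
      rcases lt_trichotomy (k : ℤ) (k' : ℤ) with h | h | h
      · have h1k : (1 : ℤ) ≤ (k' : ℤ) - k := by omega
        have := mul_le_mul_of_nonneg_right h1k (by positivity : (0 : ℤ) ≤ (n : ℤ))
        rw [sub_mul, one_mul] at this
        linarith
      · exact h
      · have h1k : (1 : ℤ) ≤ (k : ℤ) - k' := by omega
        have := mul_le_mul_of_nonneg_right h1k (by positivity : (0 : ℤ) ≤ (n : ℤ))
        rw [sub_mul, one_mul] at this
        linarith
    exact_mod_cast hcast
  subst hk
  -- step 2 : r = r'
  have key : ∀ (j j' : Fin m → ℤ), (∀ l, j l ≤ n) → (∀ l, 1 ≤ j' l) →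
      ∀ (s s' : ℕ) (hs : s < m) (hs' : s' < m),
      semi n j (k * m + s) = semi n j' (k * m + s') → ¬ s < s' := by
    intro j j' g3 g1' s s' hs hs' hsem hlt
    obtain ⟨l0, hl0⟩ : ∃ l0 : Fin m, (l0 : ℕ) = m - s' := ⟨⟨m - s', by omega⟩, rfl⟩
    have h0 := congrFun hsem l0
    rw [semi_lo n j k s hs l0 (by omega), semi_hi n j' k s' hs' l0 (by omega)] at h0
    have b2 := g3 ⟨(l0 : ℕ) + s, by omega⟩
    have b1' := g1' ⟨(l0 : ℕ) + s' - m, by omega⟩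
    linarith
  have hrr : r = r' := by
    have a1 := key i i' h3 h1' r r' hr hr' hsem
    have a2 := key i' i h3' h1 r' r hr' hr hsem.symm
    omega
  subst hrr
  refine ⟨funext fun j => ?_, rfl⟩
  have hjm := j.isLt
  rcases le_or_gt r (j : ℕ) with hj | hj
  · obtain ⟨l0, hl0⟩ : ∃ l0 : Fin m, (l0 : ℕ) = (j : ℕ) - r := ⟨⟨(j : ℕ) - r, by omega⟩, rfl⟩
    have h0 := congrFun hsem l0
    rw [semi_lo n i k r hr l0 (by omega), semi_lo n i' k r hr l0 (by omega)] at h0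
    have he : (⟨(l0 : ℕ) + r, by omega⟩ : Fin m) = j := Fin.ext (by simp only []; omega)
    rw [he] at h0
    linarith
  · obtain ⟨l0, hl0⟩ : ∃ l0 : Fin m, (l0 : ℕ) = (j : ℕ) + m - r := ⟨⟨(j : ℕ) + m - r, by omega⟩, rfl⟩
    have h0 := congrFun hsem l0
    rw [semi_hi n i k r hr l0 (by omega), semi_hi n i' k r hr l0 (by omega)] at h0
    have he : (⟨(l0 : ℕ) + r - m, by have := l0.isLt; omega⟩ : Fin m) = j :=
      Fin.ext (by simp only []; omega)
    rw [he] at h0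
    linarith

lemma semi_surj (m p : ℕ) (hm : 1 ≤ m) (hp : 1 ≤ p) (n : ℕ) (hn : n = m + p)
    (α : Fin m → ℤ) (hα : Idx n α) :
    ∃ (i : Fin m → ℤ) (d : ℕ), IdxGr n i ∧ semi n i d = α := by
  obtain ⟨h1, h2, h3⟩ := hα
  have hn0 : (0 : ℤ) < (n : ℤ) := by exact_mod_cast (by omega : 0 < n)
  obtain ⟨l0, hl0⟩ : ∃ l0 : Fin m, (l0 : ℕ) = 0 := ⟨⟨0, by omega⟩, rfl⟩
  have hmono : ∀ a b : Fin m, (a : ℕ) ≤ (b : ℕ) → α a ≤ α b := by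
    intro a b hab
    rcases eq_or_lt_of_le hab with h | h
    · exact le_of_eq (congrArg α (Fin.ext h))
    · exact le_of_lt (h2 h)
  have hspread : ∀ a b : Fin m, (a : ℕ) < (b : ℕ) → α b - α a < n := fun a b h => h3 a b h
  set K : ℤ := (α l0 - 1) / n with hK
  have hmod1 : 0 ≤ (α l0 - 1) % n := Int.emod_nonneg _ (by omega)
  have hmod2 : (α l0 - 1) % n < n := Int.emod_lt_of_pos _ hn0
  have hdm := Int.mul_ediv_add_emod (α l0 - 1) n
  rw [← hK] at hdm
  have hK1 : (n : ℤ) * K + 1 ≤ α l0 := by omega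
  have hK2 : α l0 ≤ (n : ℤ) * K + n := by omega
  have hKnn : 0 ≤ K := Int.ediv_nonneg (by have := h1 l0; omega) hn0.le
  -- the filter set
  set S : Finset (Fin m) := Finset.univ.filter (fun l => (K + 1) * n < α l) with hS
  set r : ℕ := S.card with hrdef
  have hup : ∀ a b : Fin m, a ∈ S → (a : ℕ) ≤ (b : ℕ) → b ∈ S := by
    intro a b ha hab
    rw [hS, Finset.mem_filter] at *
    exact ⟨Finset.mem_univ _, lt_of_lt_of_le ha.2 (hmono a b hab)⟩
  have hl0S : l0 ∉ S := by
    rw [hS, Finset.mem_filter]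
    push_neg
    intro _
    nlinarith
  have hr : r < m := by
    have hsub : S ⊆ Finset.univ.erase l0 := fun x hx =>
      Finset.mem_erase.mpr ⟨fun h => hl0S (h ▸ hx), Finset.mem_univ _⟩
    have := Finset.card_le_card hsub
    rw [Finset.card_erase_of_mem (Finset.mem_univ _)] at this
    simp only [Finset.card_univ, Fintype.card_fin] at this
    omega
  -- characterization of S
  have hchar : ∀ l : Fin m, (K + 1) * n < α l ↔ m - r ≤ (l : ℕ) := by
    intro l
    constructor
    · intro h
      by_contra hcon
      push_neg at hcon
      have hsub : Finset.Ici l ⊆ S := fun x hx =>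
        hup l x (Finset.mem_filter.mpr ⟨Finset.mem_univ _, h⟩) (Fin.le_def.mp (Finset.mem_Ici.mp hx))
      have := Finset.card_le_card hsub
      rw [Fin.card_Ici] at this
      omega
    · intro h
      by_contra hcon
      have hlS : l ∉ S := by
        rw [hS, Finset.mem_filter]
        push_neg
        exact fun _ => not_lt.mp hcon
      have hsub : S ⊆ Finset.Ioi l := by
        intro x hx
        rw [Finset.mem_Ioi]
        rcases lt_trichotomy (l : ℕ) (x : ℕ) with hh | hh | hh
        · exact hh
        · exact absurd (Fin.ext hh ▸ hx) hlS
        · exact absurd (hup x l hx (by omega)) hlS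
      have := Finset.card_le_card hsub
      rw [Fin.card_Ioi] at this
      omega
  -- define i
  have hidx1 : ∀ j : Fin m, r ≤ (j : ℕ) → (j : ℕ) - r < m := fun j _ => by
    have := j.isLt; omega
  have hidx2 : ∀ j : Fin m, (j : ℕ) < r → (j : ℕ) + m - r < m := fun j h => by omega
  set i : Fin m → ℤ := fun j =>
    if h : r ≤ (j : ℕ) then α ⟨(j : ℕ) - r, hidx1 j h⟩ - K * n
    else α ⟨(j : ℕ) + m - r, hidx2 j (by omega)⟩ - (K + 1) * n with hi
  -- bounds on α values
  have hbd1 : ∀ l : Fin m, (l : ℕ) < m - r → K * n + 1 ≤ α l ∧ α l ≤ (K + 1) * n := by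
    intro l hl
    have hnotS : ¬ (K + 1) * n < α l := fun h => by
      have := (hchar l).mp h; omega
    have hge : α l0 ≤ α l := hmono l0 l (by omega)
    constructor
    · nlinarith
    · omega
  have hbd2 : ∀ l : Fin m, m - r ≤ (l : ℕ) → (K + 1) * n + 1 ≤ α l ∧ α l ≤ (K + 2) * n := by
    intro l hl
    have hinS : (K + 1) * n < α l := (hchar l).mpr hl
    constructor
    · omega
    · rcases Nat.eq_zero_or_pos (l : ℕ) with h0 | h0
      · omega
      · have := hspread l0 l (by omega)
        nlinarith
  -- IdxGr
  have hIdxGr : IdxGr n i := by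
    refine ⟨fun j => ?_, fun a b hab => ?_, fun j => ?_⟩
    · rw [hi]
      simp only []
      split_ifs with h
      · have := (hbd1 ⟨(j : ℕ) - r, hidx1 j h⟩ (by have := j.isLt; simp only []; omega)).1
        linarith
      · have := (hbd2 ⟨(j : ℕ) + m - r, hidx2 j (by omega)⟩ (by simp only []; omega)).1
        linarith
    · have hab' : (a : ℕ) < (b : ℕ) := hab
      have hbm := b.isLt
      rw [hi]
      simp only []
      split_ifs with ha hb hb
      · have := h2 (show (⟨(a : ℕ) - r, hidx1 a ha⟩ : Fin m) < ⟨(b : ℕ) - r, hidx1 b hb⟩ from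
          by rw [Fin.lt_def]; simp only []; omega)
        linarith
      · omega
      · have := hspread ⟨(b : ℕ) - r, hidx1 b hb⟩ ⟨(a : ℕ) + m - r, hidx2 a (by omega)⟩
          (by simp only []; omega)
        linarith
      · have := h2 (show (⟨(a : ℕ) + m - r, hidx2 a (by omega)⟩ : Fin m) <
            ⟨(b : ℕ) + m - r, hidx2 b (by omega)⟩ from by rw [Fin.lt_def]; simp only []; omega)
        linarith
    · rw [hi]
      simp only []
      split_ifs with h
      · have := (hbd1 ⟨(j : ℕ) - r, hidx1 j h⟩ (by have := j.isLt; simp only []; omega)).2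
        linarith
      · have := (hbd2 ⟨(j : ℕ) + m - r, hidx2 j (by omega)⟩ (by simp only []; omega)).2
        linarith
  refine ⟨i, K.toNat * m + r, hIdxGr, funext fun l => ?_⟩
  have hKt : ((K.toNat : ℤ)) = K := Int.toNat_of_nonneg hKnn
  have hlm := l.isLt
  rcases Nat.lt_or_ge ((l : ℕ) + r) m with hcase | hcase
  · rw [semi_lo n i K.toNat r hr l hcase, hi]
    simp only []
    have hcond : r ≤ ((⟨(l : ℕ) + r, hcase⟩ : Fin m) : ℕ) := by simp only []; omega
    rw [dif_pos hcond]
    have he : (⟨((⟨(l : ℕ) + r, hcase⟩ : Fin m) : ℕ) - r, hidx1 _ hcond⟩ : Fin m) = l :=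
      Fin.ext (by simp only []; omega)
    rw [he, hKt]
    ring
  · rw [semi_hi n i K.toNat r hr l (by omega), hi]
    simp only []
    have hcond : ¬ r ≤ ((⟨(l : ℕ) + r - m, by omega⟩ : Fin m) : ℕ) := by simp only []; omega
    rw [dif_neg hcond]
    have he : (⟨((⟨(l : ℕ) + r - m, by omega⟩ : Fin m) : ℕ) + m - r,
        hidx2 _ (by omega)⟩ : Fin m) = l := Fin.ext (by simp only []; omega)
    rw [he, hKt]
    ring

/-- The assignment `(i, d) ↦ (i;d)` is a bijection from pairs
(`1 ≤ i_1 < ⋯ < i_m ≤ n`, `d ≥ 0`) onto `I(m,p)`, and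
`|(i;d)| = n·d + |i|` where `|α| = Σ_l (α_l - l)`. -/
theorem stmt6 (m p : ℕ) (hm : 1 ≤ m) (hp : 1 ≤ p) (n : ℕ) (hn : n = m + p) :
    (∀ (i : Fin m → ℤ) (d : ℕ), IdxGr n i →
        Idx n (semi n i d) ∧
        ∑ l : Fin m, (semi n i d l - ((l : ℤ) + 1)) =
          (n : ℤ) * d + ∑ j : Fin m, (i j - ((j : ℤ) + 1))) ∧
    (∀ (i i' : Fin m → ℤ) (d d' : ℕ), IdxGr n i → IdxGr n i' →
        semi n i d = semi n i' d' → i = i' ∧ d = d') ∧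
    (∀ α : Fin m → ℤ, Idx n α → ∃ (i : Fin m → ℤ) (d : ℕ),
        IdxGr n i ∧ semi n i d = α) := by
  refine ⟨fun i d hi => ⟨semi_idx m p hm hp n hn i hi d, ?_⟩,
    fun i i' d d' hi hi' hs => semi_inj m p hm hp n hn i i' d d' hi hi' hs,
    fun α hα => semi_surj m p hm hp n hn α hα⟩
  rw [Finset.sum_sub_distrib, Finset.sum_sub_distrib, semi_sum n (by omega) i d]
  ring
end

section
/- Pieri-type identity for alternants: let R be a commutative ring, m ≥ 1, q_1, …, q_m ∈ R and c_1, …, c_m ∈ ℕ. Then (q_1 + ⋯ + q_m) · det[(q_k^{c_j})_{1≤k,j≤m}] = Σ_{a=1}^m det[(q_k^{c_j + δ_{ja}})_{1≤k,j≤m}], where δ_{ja} = 1 if j = a and 0 otherwise (i.e. the a-th summand is the same determinant with the exponent in column a increased by 1). -/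
/-- Pieri-type identity for alternants over a commutative ring:
`(q_1 + ⋯ + q_m) · det[q_k^{c_j}] = Σ_a det[q_k^{c_j + δ_{ja}}]`. -/
theorem stmt7 (R : Type*) [CommRing R] (m : ℕ) (hm : 1 ≤ m)
    (q : Fin m → R) (c : Fin m → ℕ) :
    (∑ k : Fin m, q k) *
        Matrix.det (Matrix.of fun k j : Fin m => q k ^ c j) =
      ∑ a : Fin m,
        Matrix.det (Matrix.of fun k j : Fin m =>
          q k ^ (c j + if j = a then 1 else 0)) := by
  simp only [Matrix.det_apply', Matrix.of_apply]
  rw [Finset.mul_sum, Finset.sum_comm]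
  refine Finset.sum_congr rfl fun σ _ => ?_
  have h1 : ∀ a : Fin m, ∏ j, q (σ j) ^ (c j + if j = a then 1 else 0)
      = q (σ a) * ∏ j, q (σ j) ^ c j := by
    intro a
    simp only [pow_add, Finset.prod_mul_distrib]
    rw [mul_comm]
    congr 1
    simp [pow_ite]
  simp only [h1]
  rw [← Finset.mul_sum, ← Finset.sum_mul, Equiv.sum_comp σ q]
  ring
end

section
/- In the polynomial ring ℤ[X_1, …, X_m], for every injective function c : {1,…,m} → ℕ the Vandermonde product ∏_{1≤k<l≤m}(X_k − X_l) divides the alternant det[(X_k^{c_j})_{1≤k,j≤m}]. (This is the divisibility underlying Jacobi's bialternant expression for the Schur function s_μ = det[q_i^{μ_j+m−j}]/det[q_i^{m−j}].) -/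
open MvPolynomial

set_option linter.unusedVariables false
noncomputable section Aux9

variable {m : ℕ}

noncomputable def sub9 (a b : Fin m) : MvPolynomial (Fin m) ℤ →ₐ[ℤ] MvPolynomial (Fin m) ℤ :=
  aeval (fun i => if i = b then X a else X i)

lemma sub9_X (a b i : Fin m) :
    sub9 a b (X i) = if i = b then X a else X i := by
  simp [sub9]

noncomputable def E9 (b : Fin m) :
    MvPolynomial (Fin m) ℤ ≃ₐ[ℤ] Polynomial (MvPolynomial {i : Fin m // i ≠ b} ℤ) :=
  ((renameEquiv ℤ (Equiv.optionSubtypeNe b)).symm).trans (optionEquivLeft ℤ _)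

lemma E9_X_self (b : Fin m) : E9 b (X b) = Polynomial.X :=
  by simp [E9, renameEquiv, Equiv.optionSubtypeNe_symm_self, optionEquivLeft_X_none]

lemma E9_X_of_ne {b i : Fin m} (h : i ≠ b) :
    E9 b (X i) = Polynomial.C (X ⟨i, h⟩) := by
  simp [E9, renameEquiv, Equiv.optionSubtypeNe_symm_of_ne h, optionEquivLeft_X_some]

lemma E9_sub {a b : Fin m} (hab : a ≠ b) :
    E9 b ((X a : MvPolynomial (Fin m) ℤ) - X b)
      = -(Polynomial.X - Polynomial.C (X ⟨a, hab⟩)) := by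
  rw [map_sub, E9_X_self, E9_X_of_ne hab]; ring

lemma prime9 {a b : Fin m} (hab : a ≠ b) :
    Prime ((X a : MvPolynomial (Fin m) ℤ) - X b) := by
  rw [← MulEquiv.prime_iff (E9 b).toMulEquiv]
  show Prime (E9 b (X a - X b))
  rw [E9_sub hab]
  exact (Polynomial.prime_X_sub_C _).neg

lemma dvd9 {a b : Fin m} (hab : a ≠ b) {p : MvPolynomial (Fin m) ℤ}
    (hp : sub9 a b p = 0) : ((X a : MvPolynomial (Fin m) ℤ) - X b) ∣ p := by
  set a' : {i : Fin m // i ≠ b} := ⟨a, hab⟩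
  set ψ : MvPolynomial (Fin m) ℤ →ₐ[ℤ] MvPolynomial {i : Fin m // i ≠ b} ℤ :=
    ((Polynomial.aeval (X a' : MvPolynomial {i : Fin m // i ≠ b} ℤ)).restrictScalars ℤ).comp
      (E9 b).toAlgHom with hψ
  have key : (rename (Subtype.val : {i : Fin m // i ≠ b} → Fin m)).comp ψ = sub9 a b := by
    apply algHom_ext
    intro i
    by_cases h : i = b
    · subst h
      simp [hψ, E9_X_self, sub9_X, a']
    · simp [hψ, E9_X_of_ne h, sub9_X, h]
  have h0 : ψ p = 0 := by
    apply rename_injective _ Subtype.val_injective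
    have := congrArg (fun f => f p) key
    simp only [AlgHom.comp_apply] at this
    simpa [hp] using this
  have hroot : Polynomial.IsRoot (E9 b p) (X a') := by
    have : Polynomial.aeval (X a' : MvPolynomial {i : Fin m // i ≠ b} ℤ) (E9 b p) = 0 := h0
    rwa [Polynomial.aeval_def, Polynomial.eval₂_eq_eval_map, Algebra.algebraMap_self,
      Polynomial.map_id] at this
  have hdvd : (Polynomial.X - Polynomial.C (X a')) ∣ E9 b p :=
    (Polynomial.dvd_iff_isRoot).2 hroot
  have hdvd2 : E9 b ((X a : MvPolynomial (Fin m) ℤ) - X b) ∣ E9 b p := by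
    rw [E9_sub hab]; exact (neg_dvd).2 hdvd
  have := map_dvd (E9 b).symm hdvd2
  simpa using this

/-- product of pairwise-nondividing primes -/
lemma prod_primes_dvd9 {α ι : Type*} [CommMonoidWithZero α] [IsCancelMulZero α] (s : Finset ι) (f : ι → α)
    (n : α) (hp : ∀ i ∈ s, Prime (f i))
    (hnd : ∀ i ∈ s, ∀ j ∈ s, i ≠ j → ¬ f i ∣ f j)
    (hd : ∀ i ∈ s, f i ∣ n) : (∏ i ∈ s, f i) ∣ n := by
  classical
  induction s using Finset.cons_induction generalizing n with
  | empty => simp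
  | cons a s ha ih =>
    obtain ⟨k, rfl⟩ := hd a (Finset.mem_cons_self a s)
    rw [Finset.prod_cons]
    refine mul_dvd_mul_left _ (ih k (fun i hi => hp i (Finset.mem_cons_of_mem hi))
      (fun i hi j hj hij => hnd i (Finset.mem_cons_of_mem hi) j (Finset.mem_cons_of_mem hj) hij)
      (fun i hi => ?_))
    have hdi := hd i (Finset.mem_cons_of_mem hi)
    have hpi := hp i (Finset.mem_cons_of_mem hi)
    rcases hpi.dvd_or_dvd hdi with h | h
    · exact absurd h (hnd i (Finset.mem_cons_of_mem hi) a (Finset.mem_cons_self a s)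
        (by rintro rfl; exact ha hi))
    · exact h

end Aux9

/-- In `ℤ[X_1, …, X_m]`, the Vandermonde product `∏_{k<l} (X_k - X_l)`
divides the alternant `det[X_k^{c_j}]` for any injective exponent
function `c`. -/
theorem stmt9 (m : ℕ) (hm : 1 ≤ m) (c : Fin m → ℕ) (hc : Function.Injective c) :
    (∏ k : Fin m, ∏ l ∈ Finset.Ioi k,
        ((X k : MvPolynomial (Fin m) ℤ) - X l)) ∣
      Matrix.det (Matrix.of fun k j : Fin m =>
        (X k : MvPolynomial (Fin m) ℤ) ^ c j) := by
  classical
  rw [← Finset.prod_sigma (Finset.univ) (fun k => Finset.Ioi k)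
    (fun p => (X p.1 : MvPolynomial (Fin m) ℤ) - X p.2)]
  refine prod_primes_dvd9 _ _ _ ?_ ?_ ?_
  · rintro ⟨a, b⟩ hab
    have : a < b := Finset.mem_Ioi.1 (Finset.mem_sigma.1 hab).2
    exact prime9 this.ne
  · rintro ⟨a, b⟩ hab ⟨k, l⟩ hkl hne hdvd
    have hab' : a < b := Finset.mem_Ioi.1 (Finset.mem_sigma.1 hab).2
    have hkl' : k < l := Finset.mem_Ioi.1 (Finset.mem_sigma.1 hkl).2
    have h0 : sub9 a b ((X a : MvPolynomial (Fin m) ℤ) - X b) = 0 := by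
      rw [map_sub, sub9_X, sub9_X, if_neg hab'.ne, if_pos rfl, sub_self]
    have h1 : sub9 a b ((X k : MvPolynomial (Fin m) ℤ) - X l) = 0 := by
      obtain ⟨q, hq⟩ := hdvd
      rw [hq, map_mul, h0, zero_mul]
    rw [map_sub, sub9_X, sub9_X] at h1
    have hst : (if k = b then X a else X k : MvPolynomial (Fin m) ℤ)
        ≠ (if l = b then X a else X l) := by
      split_ifs with h h' h'
      · exact absurd (h.trans h'.symm) hkl'.ne
      · subst h
        intro heq
        exact absurd ((X_injective heq).symm ▸ hkl') (lt_asymm hab')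
      · subst h'
        intro heq
        have : k = a := X_injective heq
        exact hne (by subst this; rfl)
      · exact fun heq => hkl'.ne (X_injective heq)
    exact hst (sub_eq_zero.1 h1)
  · rintro ⟨a, b⟩ hab
    have hab' : a < b := Finset.mem_Ioi.1 (Finset.mem_sigma.1 hab).2
    apply dvd9 hab'.ne
    rw [AlgHom.map_det]
    apply Matrix.det_zero_of_row_eq hab'.ne
    funext j
    show sub9 a b (X a ^ c j) = sub9 a b (X b ^ c j)
    rw [map_pow, map_pow, sub9_X, sub9_X, if_neg hab'.ne, if_pos rfl]
end

section
/- Fix integers m ≥ 1, p ≥ 1, n = m + p, and define P : ℕ → ℤ by P(k) = n·(−1)^{(k/n)(m−1)} if k ≥ 1 and n divides k, and P(k) = 0 otherwise. Let μ_1 ≥ μ_2 ≥ ⋯ ≥ μ_m ≥ 0 be integers with μ_1 + ⋯ + μ_m = mp. Then det[(P(μ_j + m + i − j))_{1≤i,j≤m}] = n^m if μ = (p, p, …, p), and det[(P(μ_j + m + i − j))_{1≤i,j≤m}] = 0 otherwise. -/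
/-- The power sums of the roots of `z^n + (-1)^m`:
`P(k) = n·(-1)^{(k/n)(m-1)}` if `k ≥ 1` and `n ∣ k`, else `0`. -/
def Psum (m n : ℕ) (k : ℕ) : ℤ :=
  if 1 ≤ k ∧ n ∣ k then (n : ℤ) * (-1 : ℤ) ^ ((k / n) * (m - 1)) else 0

/-- For a partition `μ_1 ≥ ⋯ ≥ μ_m ≥ 0` with `Σ μ_j = m·p`, the determinant
`det[P(μ_j + m + i - j)]` equals `n^m` when `μ = (p,…,p)` and `0` otherwise. -/
theorem stmt13 (m p : ℕ) (hm : 1 ≤ m) (hp : 1 ≤ p) (n : ℕ) (hn : n = m + p)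
    (μ : Fin m → ℕ) (hμ : Antitone μ) (hsum : ∑ j, μ j = m * p) :
    Matrix.det (Matrix.of fun i j : Fin m =>
        Psum m n (μ j + m + (i : ℕ) - (j : ℕ))) =
      if ∀ j, μ j = p then (n : ℤ) ^ m else 0 := by
  by_cases hall : ∀ j, μ j = p
  · rw [if_pos hall]
    have hdiag : (Matrix.of fun i j : Fin m =>
        Psum m n (μ j + m + (i : ℕ) - (j : ℕ))) =
        Matrix.diagonal (fun _ : Fin m => (n : ℤ) * (-1 : ℤ) ^ (m - 1)) := by
      ext i j
      simp only [Matrix.of_apply, Matrix.diagonal_apply, Psum, hall]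
      rcases eq_or_ne i j with h | h
      · subst h
        have hk : p + m + (i : ℕ) - (i : ℕ) = n := by omega
        rw [hk, if_pos ⟨by omega, dvd_refl n⟩, if_pos rfl, Nat.div_self (by omega), one_mul]
      · rw [if_neg h, if_neg]
        rintro ⟨h1, q, hq⟩
        have hi : (i : ℕ) < m := i.isLt
        have hj : (j : ℕ) < m := j.isLt
        have hij : (i : ℕ) ≠ (j : ℕ) := fun hc => h (Fin.ext hc)
        -- k = p + m + i - j, with p+1 ≤ k ≤ p+2m-1 < 2n, k ≠ n
        rcases Nat.lt_or_ge q 2 with hq2 | hq2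
        · interval_cases q <;> omega
        · have h2 : 2 * n ≤ n * q := by nlinarith
          have h3 : 2 * n ≤ p + m + (i : ℕ) - (j : ℕ) := by rw [hq]; exact h2
          omega
    rw [hdiag, Matrix.det_diagonal, Finset.prod_const, Finset.card_univ, Fintype.card_fin,
      mul_pow, ← pow_mul]
    have : Even ((m - 1) * m) := by
      rcases Nat.even_or_odd m with he | ho
      · exact he.mul_left _
      · exact (Nat.Odd.sub_odd ho odd_one).mul_right _
    rw [this.neg_one_pow, mul_one]
  · rw [if_neg hall, Matrix.det_apply]
    refine Finset.sum_eq_zero fun σ _ => ?_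
    suffices hprod0 : ∏ i, (Matrix.of fun i j : Fin m =>
        Psum m n (μ j + m + (i : ℕ) - (j : ℕ))) (σ i) i = 0 by
      rw [hprod0, smul_zero]
    by_contra hprod
    have hne : ∀ j : Fin m, Psum m n (μ j + m + ((σ j : Fin m) : ℕ) - (j : ℕ)) ≠ 0 := by
      intro j hj
      exact hprod (Finset.prod_eq_zero (Finset.mem_univ j) hj)
    -- each entry gives divisibility
    have hdvd : ∀ j : Fin m, 1 ≤ μ j + m + (σ j : ℕ) - (j : ℕ) ∧
        n ∣ (μ j + m + (σ j : ℕ) - (j : ℕ)) := by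
      intro j
      by_contra hc
      exact hne j (by simp [Psum, if_neg hc])
    set k : Fin m → ℕ := fun j => μ j + m + (σ j : ℕ) - (j : ℕ) with hk
    set q : Fin m → ℕ := fun j => k j / n with hqdef
    have hn1 : 1 ≤ n := by omega
    have hkq : ∀ j, k j = n * q j := fun j => (Nat.mul_div_cancel' (hdvd j).2).symm
    have hq1 : ∀ j, 1 ≤ q j := by
      intro j
      by_contra h0
      have h1 : q j = 0 := by omega
      have h2 : μ j + m + ((σ j : Fin m) : ℕ) - (j : ℕ) = 0 := by
        have := hkq j; rw [h1, Nat.mul_zero] at this; exact this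
      have := (hdvd j).1
      omega
    have hσ : ∑ j : Fin m, ((σ j : Fin m) : ℕ) = ∑ j : Fin m, (j : ℕ) :=
      Equiv.sum_comp σ (fun j => (j : ℕ))
    have hσZ : ∑ j : Fin m, (((σ j : Fin m) : ℕ) : ℤ) = ∑ j : Fin m, ((j : ℕ) : ℤ) := by
      exact_mod_cast congrArg (Nat.cast : ℕ → ℤ) hσ
    have hμZ : ∑ j : Fin m, (μ j : ℤ) = (m : ℤ) * p := by
      have := congrArg (Nat.cast : ℕ → ℤ) hsum
      push_cast at this
      exact this
    have hc : ∀ j : Fin m, (k j : ℤ) =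
        ((μ j : ℤ) + m) + ((((σ j : Fin m) : ℕ) : ℤ) - ((j : ℕ) : ℤ)) := by
      intro j
      have h : (j : ℕ) ≤ μ j + m + ((σ j : Fin m) : ℕ) := by have := j.isLt; omega
      show ((μ j + m + ((σ j : Fin m) : ℕ) - (j : ℕ) : ℕ) : ℤ) = _
      rw [Nat.cast_sub h]
      push_cast
      ring
    have hsumk : ∑ j, (k j : ℤ) = (m : ℤ) * n := by
      calc ∑ j, (k j : ℤ)
          = ∑ j : Fin m, (((μ j : ℤ) + m) + ((((σ j : Fin m) : ℕ) : ℤ) - ((j : ℕ) : ℤ))) :=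
            Finset.sum_congr rfl fun j _ => hc j
        _ = (m : ℤ) * p + m * m + 0 := by
            rw [Finset.sum_add_distrib, Finset.sum_add_distrib, Finset.sum_sub_distrib, hσZ,
              sub_self, hμZ, Finset.sum_const, Finset.card_univ, Fintype.card_fin, nsmul_eq_mul]
        _ = (m : ℤ) * n := by rw [hn]; push_cast; ring
    have hsumq : ∑ j, q j = m := by
      have h1 : ∑ j, k j = n * ∑ j, q j := by
        rw [Finset.mul_sum]; exact Finset.sum_congr rfl fun j _ => hkq j
      have h2 : (↑(∑ j, k j) : ℤ) = (m : ℤ) * n := by rw [← hsumk]; push_cast; rfl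
      have h3 : (n : ℤ) * (∑ j, q j : ℕ) = (m : ℤ) * n := by
        rw [← h2, h1]; push_cast; ring
      have h4 : n * ∑ j, q j = m * n := by exact_mod_cast h3
      have hn0 : 0 < n := by omega
      rw [mul_comm m n] at h4
      exact Nat.eq_of_mul_eq_mul_left hn0 h4
    have hqone : ∀ j : Fin m, q j = 1 := by
      have hcard : ∑ _j : Fin m, 1 = ∑ j, q j := by rw [hsumq]; simp
      have h := (Finset.sum_eq_sum_iff_of_le (fun j (_ : j ∈ Finset.univ) => hq1 j)).1 hcard
      intro j; exact (h j (Finset.mem_univ j)).symm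
    -- μ j = p + j - σ j in ℤ
    have hμj : ∀ j : Fin m, (μ j : ℤ) = p + (j : ℕ) - (σ j : ℕ) := by
      intro j
      have h1 : k j = n := by rw [hkq j, hqone j, Nat.mul_one]
      have h1' : μ j + m + ((σ j : Fin m) : ℕ) - (j : ℕ) = n := h1
      have h2 := j.isLt
      omega
    -- σ strictly mono
    have hmono : StrictMono (σ : Fin m → Fin m) := by
      intro a b hab
      have h1 : μ b ≤ μ a := hμ hab.le
      have h2 : (a : ℕ) < (b : ℕ) := hab
      have ha := hμj a
      have hb := hμj b
      have : ((σ a : Fin m) : ℕ) < ((σ b : Fin m) : ℕ) := by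
        have h1' : (μ b : ℤ) ≤ (μ a : ℤ) := by exact_mod_cast h1
        omega
      exact this
    have inst : WellFoundedLT (Fin m) := inferInstance
    have hle : ∀ j : Fin m, j ≤ σ j := fun j => @StrictMono.le_apply (Fin m) _ inst _ hmono j
    have hid : ∀ j : Fin m, σ j = j := by
      have hσ : ∑ j : Fin m, ((σ j : Fin m) : ℕ) = ∑ j : Fin m, (j : ℕ) :=
        Equiv.sum_comp σ (fun j => (j : ℕ))
      have h := (Finset.sum_eq_sum_iff_of_le (f := fun j : Fin m => (j : ℕ)) (g := fun j : Fin m => ((σ j : Fin m) : ℕ)) (fun j _ => (hle j : ((j : Fin m) : ℕ) ≤ (σ j : ℕ)))).1 hσ.symm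
      intro j
      exact Fin.ext (h j (Finset.mem_univ j)).symm
    apply hall
    intro j
    have := hμj j
    rw [hid j] at this
    omega
end

section
/- Verification of the initial conditions of the quantum-cohomology formula: let μ_1 ≥ μ_2 ≥ ⋯ ≥ μ_m ≥ 0 be integers with μ_1 + ⋯ + μ_m = mp. Then (−1)^{m(m−1)/2} n^{−m} Σ_{I ⊆ R, #I = m} (∏_{k=1}^m y_k) · ∏_{1≤k<l≤m}(y_k − y_l) · det[(y_k^{\,μ_j + m − j})_{1≤k,j≤m}] equals 1 if μ = (p, p, …, p) and equals 0 otherwise, where y_1, …, y_m is any listing of the m-element subset I. -/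
/-- The finite set of the `n` roots of `z^n + (-1)^m` in `ℂ`
(the `n` distinct complex numbers `y` with `y^n = (-1)^{m+1}`). -/
noncomputable def rootsF (m n : ℕ) : Finset ℂ :=
  (Polynomial.nthRoots n ((-1 : ℂ) ^ (m + 1))).toFinset

open Finset Equiv


lemma rootsF_power_sum (m n : ℕ) (hn : 0 < n) (s : ℕ) :
    ∑ y ∈ rootsF m n, y ^ s =
      if n ∣ s then (n : ℂ) * ((-1 : ℂ) ^ (m + 1)) ^ (s / n) else 0 := by
  set Z : ℂ := (-1 : ℂ) ^ (m + 1) with hZ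
  have hZ0 : Z ≠ 0 := by
    simp [hZ]
  obtain ⟨α, hα⟩ := IsAlgClosed.exists_pow_nat_eq Z hn
  have hα0 : α ≠ 0 := by
    intro h; rw [h] at hα; simp [zero_pow hn.ne'] at hα; exact hZ0 hα.symm
  have hω := Complex.isPrimitiveRoot_exp n hn.ne'
  set ω : ℂ := Complex.exp (2 * Real.pi * Complex.I / n) with hωdef
  have hR : rootsF m n = (Finset.range n).image (fun t => ω ^ t * α) := by
    unfold rootsF
    rw [hω.nthRoots_eq hα]
    ext x
    simp [Finset.mem_image, Finset.mem_range]
  have hinj : Set.InjOn (fun t => ω ^ t * α) (Finset.range n) := by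
    intro i hi j hj hij
    simp only [Finset.coe_range, Set.mem_Iio] at hi hj
    exact hω.pow_inj hi hj (by field_simp at hij; exact hij)
  rw [hR, Finset.sum_image hinj]
  have hrw : ∀ t, (ω ^ t * α) ^ s = (ω ^ s) ^ t * α ^ s := by
    intro t; rw [mul_pow, ← pow_mul, ← pow_mul, mul_comm t s]
  simp only [hrw, ← Finset.sum_mul]
  by_cases hd : n ∣ s
  · rw [if_pos hd]
    have h1 : ω ^ s = 1 := (hω.pow_eq_one_iff_dvd s).mpr hd
    have h2 : α ^ s = Z ^ (s / n) := by
      calc α ^ s = (α ^ n) ^ (s / n) := by rw [← pow_mul, Nat.mul_div_cancel' hd]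
      _ = Z ^ (s / n) := by rw [hα]
    simp [h1, h2]
  · rw [if_neg hd]
    have h1 : ω ^ s ≠ 1 := fun h => hd ((hω.pow_eq_one_iff_dvd s).mp h)
    rw [geom_sum_eq h1 n]
    have h2 : (ω ^ s) ^ n = 1 := by
      rw [← pow_mul, mul_comm, pow_mul, hω.pow_eq_one, one_pow]
    simp [h2]


noncomputable def Gfun (m : ℕ) (b : Fin m → ℕ) (v : Fin m → ℂ) : ℂ :=
  (∏ k, v k) * (Matrix.of fun k j : Fin m => v k ^ (j : ℕ)).det *
    (Matrix.of fun k j : Fin m => v k ^ b j).det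

lemma det_perm_rows {m : ℕ} (v : Fin m → ℂ) (c : Fin m → ℕ) (π : Equiv.Perm (Fin m)) :
    (Matrix.of fun k j : Fin m => v (π k) ^ c j).det =
      (Equiv.Perm.sign π : ℤ) * (Matrix.of fun k j : Fin m => v k ^ c j).det := by
  have : (Matrix.of fun k j : Fin m => v (π k) ^ c j)
      = (Matrix.of fun k j : Fin m => v k ^ c j).submatrix π id := rfl
  rw [this, Matrix.det_permute]

lemma Gfun_perm (m : ℕ) (b : Fin m → ℕ) (v : Fin m → ℂ) (π : Equiv.Perm (Fin m)) :
    Gfun m b (v ∘ π) = Gfun m b v := by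
  unfold Gfun
  have h1 : ∏ k, (v ∘ π) k = ∏ k, v k := Equiv.prod_comp π v
  have h2 := det_perm_rows v (fun j => (j : ℕ)) π
  have h3 := det_perm_rows v b π
  simp only [Function.comp] at *
  rw [h1, h2, h3]
  have hs : ((Equiv.Perm.sign π : ℤ) : ℂ) * ((Equiv.Perm.sign π : ℤ) : ℂ) = 1 := by
    rcases Int.units_eq_one_or (Equiv.Perm.sign π) with h | h <;> simp [h]
  calc (∏ k, v k) * ((Equiv.Perm.sign π : ℤ) * (Matrix.of fun k j : Fin m => v k ^ (j:ℕ)).det) *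
      ((Equiv.Perm.sign π : ℤ) * (Matrix.of fun k j : Fin m => v k ^ b j).det)
      = (((Equiv.Perm.sign π : ℤ) : ℂ) * ((Equiv.Perm.sign π : ℤ) : ℂ)) *
        ((∏ k, v k) * (Matrix.of fun k j : Fin m => v k ^ (j:ℕ)).det *
          (Matrix.of fun k j : Fin m => v k ^ b j).det) := by ring
    _ = _ := by rw [hs, one_mul]

lemma Gfun_zero (m : ℕ) (b : Fin m → ℕ) (v : Fin m → ℂ)
    (hv : ¬ Function.Injective v) : Gfun m b v = 0 := by
  rw [Function.not_injective_iff] at hv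
  obtain ⟨a, a', hva, hne⟩ := hv
  have : (Matrix.of fun k j : Fin m => v k ^ (j : ℕ)).det = 0 := by
    apply Matrix.det_zero_of_row_eq hne
    funext j
    simp [hva]
  unfold Gfun
  rw [this, mul_zero, zero_mul]

lemma sum_piFinset_eq (m : ℕ) (R : Finset ℂ) (b : Fin m → ℕ)
    (L : Finset ℂ → (Fin m → ℂ))
    (hL : ∀ I : Finset ℂ, I.card = m →
      Function.Injective (L I) ∧ ∀ k, L I k ∈ I) :
    ∑ y ∈ Fintype.piFinset (fun _ : Fin m => R), Gfun m b y
      = (m.factorial : ℂ) * ∑ I ∈ R.powersetCard m, Gfun m b (L I) := by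
  classical
  -- restrict to injective tuples
  rw [← Finset.sum_filter_of_ne (p := fun y => Function.Injective y)
    (fun y _ h => by by_contra hi; exact h (Gfun_zero m b y hi))]
  -- key fact about L I for I of card m
  have hLim : ∀ I : Finset ℂ, I.card = m → Finset.image (L I) Finset.univ = I := by
    intro I hI
    apply Finset.eq_of_subset_of_card_le
    · intro x hx
      simp only [Finset.mem_image] at hx
      obtain ⟨k, _, rfl⟩ := hx
      exact (hL I hI).2 k
    · rw [Finset.card_image_of_injective _ (hL I hI).1, Finset.card_univ,
        Fintype.card_fin, hI]
  -- fiber decomposition over the image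
  have hmap : ∀ y ∈ (Fintype.piFinset fun _ : Fin m => R).filter
      (fun y => Function.Injective y),
      Finset.image y Finset.univ ∈ R.powersetCard m := by
    intro y hy
    rw [Finset.mem_filter] at hy
    rw [Finset.mem_powersetCard]
    constructor
    · intro x hx
      simp only [Finset.mem_image] at hx
      obtain ⟨k, _, rfl⟩ := hx
      exact Fintype.mem_piFinset.mp hy.1 k
    · rw [Finset.card_image_of_injective _ hy.2, Finset.card_univ, Fintype.card_fin]
  rw [← Finset.sum_fiberwise_of_maps_to hmap (Gfun m b)]
  rw [Finset.mul_sum]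
  refine Finset.sum_congr rfl fun I hI => ?_
  rw [Finset.mem_powersetCard] at hI
  obtain ⟨hIR, hIc⟩ := hI
  obtain ⟨hLinj, hLmem⟩ := hL I hIc
  -- the fiber over I is the set of (L I) ∘ π for π a permutation
  have key : ∑ y ∈ ((Fintype.piFinset fun _ : Fin m => R).filter
        (fun y => Function.Injective y)).filter
        (fun y => Finset.image y Finset.univ = I), Gfun m b y
      = ∑ _π : Equiv.Perm (Fin m), Gfun m b (L I) := by
    refine (Finset.sum_bij (fun (π : Equiv.Perm (Fin m)) _ => L I ∘ π) ?_ ?_ ?_ ?_).symm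
    · intro π _
      simp only [Finset.mem_filter, Fintype.mem_piFinset]
      refine ⟨⟨fun k => hIR (hLmem (π k)), hLinj.comp π.injective⟩, ?_⟩
      have hpu : Finset.image (π : Fin m → Fin m) Finset.univ = Finset.univ := by
        ext j; simp
      rw [← Finset.image_image, hpu]
      exact hLim I hIc
    · intro π _ π' _ h
      ext k
      exact Fin.val_eq_of_eq (hLinj (congrFun h k))
    · intro y hy
      simp only [Finset.mem_filter, Fintype.mem_piFinset] at hy
      obtain ⟨⟨_, hyinj⟩, hyim⟩ := hy
      have hry : Set.range y = (I : Set ℂ) := by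
        rw [← hyim, Finset.coe_image, Finset.coe_univ, Set.image_univ]
      have hrL : Set.range (L I) = (I : Set ℂ) := by
        conv_rhs => rw [← hLim I hIc]
        rw [Finset.coe_image, Finset.coe_univ, Set.image_univ]
      set π : Fin m ≃ Fin m :=
        (Equiv.ofInjective y hyinj).trans ((Equiv.setCongr (hry.trans hrL.symm)).trans
          (Equiv.ofInjective (L I) hLinj).symm) with hπ
      refine ⟨π, Finset.mem_univ _, ?_⟩
      funext k
      simp only [Function.comp_apply, hπ, Equiv.trans_apply, Equiv.setCongr_apply]
      rw [Equiv.apply_ofInjective_symm hLinj]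
      rfl
    · intro π _
      exact (Gfun_perm m b (L I) π).symm
  rw [key, Finset.sum_const, Finset.card_univ, Fintype.card_perm, Fintype.card_fin,
    nsmul_eq_mul]

lemma det_expand {m : ℕ} (f : Fin m → Fin m → ℂ) :
    (Matrix.of f).det = ∑ σ : Perm (Fin m),
      ((Equiv.Perm.sign σ : ℤ) : ℂ) * ∏ i, f i (σ i) := by
  rw [← Matrix.det_transpose, Matrix.det_apply']
  rfl


lemma tuple_sum (m p n : ℕ) (hm : 1 ≤ m) (hp : 1 ≤ p) (hn : n = m + p)
    (μ : Fin m → ℕ) (hμ : Antitone μ) (hsum : ∑ j, μ j = m * p) :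
    ∑ y ∈ Fintype.piFinset (fun _ : Fin m => rootsF m n),
      Gfun m (fun j => μ j + (m - 1 - (j : ℕ))) y
      = if (∀ j, μ j = p) then
          (m.factorial : ℂ) * ((n : ℂ) * (-1 : ℂ) ^ (m + 1)) ^ m else 0 := by
  classical
  have hn0 : 0 < n := by omega
  set Z : ℂ := (-1 : ℂ) ^ (m + 1) with hZdef
  set b : Fin m → ℕ := fun j => μ j + (m - 1 - (j : ℕ)) with hbdef
  set e : Perm (Fin m) → Perm (Fin m) → Fin m → ℕ :=
    fun σ τ k => 1 + (σ k : ℕ) + b (τ k) with hedef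
  -- expand G as a double sum over permutations
  have hG : ∀ y : Fin m → ℂ, Gfun m b y = ∑ σ : Perm (Fin m), ∑ τ : Perm (Fin m),
      (((Equiv.Perm.sign σ : ℤ) : ℂ) * ((Equiv.Perm.sign τ : ℤ) : ℂ)) *
        ∏ k, y k ^ (e σ τ k) := by
    intro y
    unfold Gfun
    rw [det_expand, det_expand, mul_assoc, Finset.sum_mul_sum, Finset.mul_sum]
    refine Finset.sum_congr rfl fun σ _ => ?_
    rw [Finset.mul_sum]
    refine Finset.sum_congr rfl fun τ _ => ?_
    have hcomb : ∏ k, y k ^ (e σ τ k)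
        = (∏ k, y k) * (∏ k, y k ^ ((σ k : ℕ))) * (∏ k, y k ^ (b (τ k))) := by
      simp only [hedef, pow_add, pow_one, Finset.prod_mul_distrib]
    rw [hcomb]
    ring
  -- swap sums and factor over coordinates
  have hswap : ∑ y ∈ Fintype.piFinset (fun _ : Fin m => rootsF m n), Gfun m b y
      = ∑ σ : Perm (Fin m), ∑ τ : Perm (Fin m),
        (((Equiv.Perm.sign σ : ℤ) : ℂ) * ((Equiv.Perm.sign τ : ℤ) : ℂ)) *
          ∏ k, (if n ∣ e σ τ k then (n : ℂ) * Z ^ (e σ τ k / n) else 0) := by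
    rw [Finset.sum_congr rfl fun y _ => hG y, Finset.sum_comm]
    refine Finset.sum_congr rfl fun σ _ => ?_
    rw [Finset.sum_comm]
    refine Finset.sum_congr rfl fun τ _ => ?_
    rw [← Finset.mul_sum,
      Finset.sum_prod_piFinset (rootsF m n) (fun k x => x ^ e σ τ k)]
    congr 1
    exact Finset.prod_congr rfl fun k _ => rootsF_power_sum m n hn0 (e σ τ k)
  rw [hswap]
  -- evaluate the product of power sums
  have key : ∀ σ τ : Perm (Fin m),
      (∏ k, (if n ∣ e σ τ k then (n : ℂ) * Z ^ (e σ τ k / n) else 0))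
      = if (∀ j, μ j = p) ∧ τ = σ then ((n : ℂ) * Z) ^ m else 0 := by
    intro σ τ
    by_cases hdvd : ∀ k, n ∣ e σ τ k
    · -- total degree forces every exponent to equal n
      have hsum_e : ∑ k, e σ τ k = m * n := by
        have h2 : ∑ k : Fin m, ((σ k : ℕ)) = ∑ j : Fin m, (j : ℕ) :=
          Equiv.sum_comp σ (fun k => (k : ℕ))
        have h3 : ∑ k : Fin m, b (τ k) = ∑ j : Fin m, b j := Equiv.sum_comp τ b
        have h4 : ∑ j : Fin m, (j : ℕ) + ∑ j : Fin m, (m - 1 - (j : ℕ))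
            = m * (m - 1) := by
          rw [← Finset.sum_add_distrib]
          rw [Finset.sum_congr rfl (fun (j : Fin m) _ =>
            show (j : ℕ) + (m - 1 - (j : ℕ)) = m - 1 by have := j.isLt; omega)]
          simp [Finset.card_univ, mul_comm]
        have h5 : ∑ j : Fin m, b j = m * p + ∑ j : Fin m, (m - 1 - (j : ℕ)) := by
          simp only [hbdef, Finset.sum_add_distrib, hsum]
        have h6 : m + m * (m - 1) + m * p = m * n := by
          obtain ⟨k, rfl⟩ : ∃ k, m = k + 1 := ⟨m - 1, by omega⟩
          subst hn
          simp only [Nat.add_sub_cancel]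
          ring
        simp only [hedef, Finset.sum_add_distrib, h2, h3, h5]
        simp only [Finset.sum_const, Finset.card_univ, Fintype.card_fin, smul_eq_mul,
          mul_one]
        generalize hA : m * (m - 1) = A at h4 h6
        generalize hB : m * p = B at h6 ⊢
        generalize hC : m * n = C at h6 ⊢
        omega
      have hub : ∀ k, n ≤ e σ τ k := fun k =>
        Nat.le_of_dvd (by simp only [hedef]; omega) (hdvd k)
      have hall : ∀ k, e σ τ k = n := by
        by_contra hc
        push_neg at hc
        obtain ⟨k0, hk0⟩ := hc
        have hlt : ∑ _k : Fin m, n < ∑ k, e σ τ k :=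
          Finset.sum_lt_sum (fun k _ => hub k)
            ⟨k0, Finset.mem_univ _, lt_of_le_of_ne (hub k0) (Ne.symm hk0)⟩
        rw [hsum_e] at hlt
        simp [Finset.sum_const, Finset.card_univ, mul_comm] at hlt
      have hb : ∀ k, b (τ k) = n - 1 - (σ k : ℕ) := by
        intro k
        have h := hall k
        simp only [hedef] at h
        omega
      have hbanti : StrictAnti b := by
        intro j j' hjj
        have h1 : μ j' ≤ μ j := hμ hjj.le
        have h2 : (j : ℕ) < (j' : ℕ) := hjj
        have h3 : (j' : ℕ) < m := j'.isLt
        simp only [hbdef]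
        omega
      set ρ : Perm (Fin m) := σ.symm.trans τ with hρ
      have hbρ : ∀ j : Fin m, b (ρ j) = n - 1 - (j : ℕ) := by
        intro j
        have h := hb (σ.symm j)
        simpa [hρ] using h
      have hρmono : StrictMono (ρ : Fin m → Fin m) := by
        intro j j' hjj
        have h1 : b (ρ j') < b (ρ j) := by
          rw [hbρ, hbρ]
          have h2 : (j : ℕ) < (j' : ℕ) := hjj
          have h3 : (j' : ℕ) < m := j'.isLt
          omega
        exact hbanti.lt_iff_gt.mp h1
      have hρid : ∀ j, ρ j = j := by
        have hr : Set.range (ρ : Fin m → Fin m) = Set.range (id : Fin m → Fin m) := by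
          rw [ρ.surjective.range_eq, Set.range_id]
        have : WellFoundedLT (Fin m) := inferInstance
        have h := (hρmono.range_inj strictMono_id).mp hr
        intro j; exact congrFun h j
      have hμp : ∀ j, μ j = p := by
        intro j
        have h1 := hbρ j
        rw [hρid j] at h1
        simp only [hbdef] at h1
        have := j.isLt
        omega
      have hτσ : τ = σ := by
        ext k
        have h := hρid (σ k)
        simp only [hρ, Equiv.trans_apply, Equiv.symm_apply_apply] at h
        rw [h]
      rw [if_pos ⟨hμp, hτσ⟩]
      rw [Finset.prod_congr rfl fun k _ => by
        rw [if_pos (hdvd k), hall k, Nat.div_self hn0, pow_one]]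
      rw [Finset.prod_const, Finset.card_univ, Fintype.card_fin]
    · push_neg at hdvd
      obtain ⟨k0, hk0⟩ := hdvd
      have h0 : (∏ k, (if n ∣ e σ τ k then (n : ℂ) * Z ^ (e σ τ k / n) else 0))
          = (0 : ℂ) :=
        Finset.prod_eq_zero (Finset.mem_univ k0) (if_neg hk0)
      rw [h0, if_neg]
      rintro ⟨hμp, rfl⟩
      apply hk0
      have hek : e τ τ k0 = n := by
        simp only [hedef, hbdef, hμp (τ k0)]
        have := (τ k0).isLt
        omega
      rw [hek]
  rw [Finset.sum_congr rfl fun σ _ => Finset.sum_congr rfl fun τ _ => by rw [key σ τ]]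
  -- collapse the double sum
  by_cases hP : ∀ j, μ j = p
  · rw [if_pos hP]
    have hinner : ∀ σ : Perm (Fin m),
        ∑ τ : Perm (Fin m), (((Equiv.Perm.sign σ : ℤ) : ℂ) * ((Equiv.Perm.sign τ : ℤ) : ℂ)) *
          (if (∀ j, μ j = p) ∧ τ = σ then ((n : ℂ) * Z) ^ m else 0)
        = ((n : ℂ) * Z) ^ m := by
      intro σ
      have hiff : ∀ τ : Perm (Fin m), ((∀ j, μ j = p) ∧ τ = σ) ↔ τ = σ :=
        fun τ => ⟨fun h => h.2, fun h => ⟨hP, h⟩⟩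
      simp only [hiff, mul_ite, mul_zero]
      rw [Finset.sum_ite_eq' Finset.univ σ]
      rw [if_pos (Finset.mem_univ σ)]
      have hs : ((Equiv.Perm.sign σ : ℤ) : ℂ) * ((Equiv.Perm.sign σ : ℤ) : ℂ) = 1 := by
        rcases Int.units_eq_one_or (Equiv.Perm.sign σ) with h | h <;> simp [h]
      rw [hs, one_mul]
    rw [Finset.sum_congr rfl fun σ _ => hinner σ]
    rw [Finset.sum_const, Finset.card_univ, Fintype.card_perm, Fintype.card_fin,
      nsmul_eq_mul]
  · rw [if_neg hP]
    have : ∀ σ τ : Perm (Fin m), ¬ ((∀ j, μ j = p) ∧ τ = σ) := fun σ τ h => hP h.1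
    simp only [this, if_false, mul_zero, Finset.sum_const_zero]


lemma prod_Ioi_eq (m : ℕ) (v : Fin m → ℂ) :
    (∏ k, ∏ l ∈ Finset.Ioi k, (v k - v l)) =
      (-1 : ℂ) ^ (m * (m - 1) / 2) *
        (Matrix.of fun k j : Fin m => v k ^ (j : ℕ)).det := by
  have hv : (Matrix.of fun k j : Fin m => v k ^ (j : ℕ)) = Matrix.vandermonde v := rfl
  rw [hv, Matrix.det_vandermonde]
  have h1 : ∀ k : Fin m, ∏ l ∈ Finset.Ioi k, (v k - v l)
      = (-1 : ℂ) ^ (Finset.Ioi k).card * ∏ l ∈ Finset.Ioi k, (v l - v k) := by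
    intro k
    rw [← Finset.prod_const, ← Finset.prod_mul_distrib]
    exact Finset.prod_congr rfl fun l _ => by ring
  rw [Finset.prod_congr rfl fun k _ => h1 k, Finset.prod_mul_distrib,
    Finset.prod_pow_eq_pow_sum]
  congr 2
  have h2 : ∀ k : Fin m, (Finset.Ioi k).card = m - 1 - (k : ℕ) := fun k => Fin.card_Ioi k
  rw [Finset.sum_congr rfl fun k _ => h2 k]
  have h3 : ∑ k : Fin m, (m - 1 - (k : ℕ)) = ∑ k : Fin m, (k : ℕ) := by
    rw [Fin.sum_univ_eq_sum_range (fun i => m - 1 - i) m,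
      Fin.sum_univ_eq_sum_range (fun i => i) m]
    exact Finset.sum_range_reflect (fun i => i) m
  have h4 : (∑ k : Fin m, (k : ℕ)) * 2 = m * (m - 1) := by
    rw [Fin.sum_univ_eq_sum_range (fun i => i) m]
    exact Finset.sum_range_id_mul_two m
  rw [h3]
  generalize hA : m * (m - 1) = A at h4 ⊢
  omega

/-- Initial conditions of the Vafa–Intriligator formula: for any partition
`μ_1 ≥ ⋯ ≥ μ_m ≥ 0` with `Σ μ_j = m·p`,
`(-1)^{m(m-1)/2} n^{-m} Σ_{I ⊆ R, #I = m} (∏ y_k)·∏_{k<l}(y_k - y_l)·det[y_k^{μ_j+m-j}]`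
equals `1` if `μ = (p,…,p)` and `0` otherwise; here `y_1,…,y_m` is any listing
of the `m`-element subset `I` (the summand does not depend on the listing). -/
theorem stmt14 (m p : ℕ) (hm : 1 ≤ m) (hp : 1 ≤ p) (n : ℕ) (hn : n = m + p)
    (μ : Fin m → ℕ) (hμ : Antitone μ) (hsum : ∑ j, μ j = m * p)
    (L : Finset ℂ → (Fin m → ℂ))
    (hL : ∀ I : Finset ℂ, I.card = m →
      Function.Injective (L I) ∧ ∀ k, L I k ∈ I) :
    (-1 : ℂ) ^ (m * (m - 1) / 2) * ((n : ℂ) ^ m)⁻¹ *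
        ∑ I ∈ (rootsF m n).powersetCard m,
          (∏ k : Fin m, L I k) *
            (∏ k : Fin m, ∏ l ∈ Finset.Ioi k, (L I k - L I l)) *
            Matrix.det (Matrix.of fun k j : Fin m =>
              L I k ^ (μ j + (m - 1 - (j : ℕ)))) =
      if ∀ j, μ j = p then 1 else 0 := by
  classical
  set Z : ℂ := (-1 : ℂ) ^ (m + 1) with hZdef
  set b : Fin m → ℕ := fun j => μ j + (m - 1 - (j : ℕ)) with hbdef
  set E : ℕ := m * (m - 1) / 2 with hEdef
  -- rewrite each summand in terms of Gfun
  have hsummand : ∀ v : Fin m → ℂ,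
      (∏ k : Fin m, v k) * (∏ k : Fin m, ∏ l ∈ Finset.Ioi k, (v k - v l)) *
        Matrix.det (Matrix.of fun k j : Fin m => v k ^ (b j))
      = (-1 : ℂ) ^ E * Gfun m b v := by
    intro v
    rw [prod_Ioi_eq m v]
    unfold Gfun
    ring
  rw [Finset.sum_congr rfl fun I _ => hsummand (L I)]
  rw [← Finset.mul_sum]
  have hsign : (-1 : ℂ) ^ E * ((n : ℂ) ^ m)⁻¹ * ((-1 : ℂ) ^ E *
      ∑ I ∈ (rootsF m n).powersetCard m, Gfun m b (L I))
      = ((n : ℂ) ^ m)⁻¹ * ∑ I ∈ (rootsF m n).powersetCard m, Gfun m b (L I) := by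
    have : (-1 : ℂ) ^ E * (-1 : ℂ) ^ E = 1 := by
      rw [← mul_pow]; norm_num
    calc (-1 : ℂ) ^ E * ((n : ℂ) ^ m)⁻¹ * ((-1 : ℂ) ^ E *
        ∑ I ∈ (rootsF m n).powersetCard m, Gfun m b (L I))
        = ((-1 : ℂ) ^ E * (-1 : ℂ) ^ E) * (((n : ℂ) ^ m)⁻¹ *
          ∑ I ∈ (rootsF m n).powersetCard m, Gfun m b (L I)) := by ring
      _ = _ := by rw [this, one_mul]
  rw [hsign]
  -- relate the subset sum to the tuple sum
  have hfiber := sum_piFinset_eq m (rootsF m n) b L hL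
  have htuple := tuple_sum m p n hm hp hn μ hμ hsum
  rw [hfiber] at htuple
  have hfact : ((m.factorial : ℂ)) ≠ 0 := Nat.cast_ne_zero.mpr m.factorial_ne_zero
  have hnne : (n : ℂ) ≠ 0 := Nat.cast_ne_zero.mpr (by omega)
  have hsub : ∑ I ∈ (rootsF m n).powersetCard m, Gfun m b (L I)
      = (m.factorial : ℂ)⁻¹ *
        (if (∀ j, μ j = p) then (m.factorial : ℂ) * ((n : ℂ) * Z) ^ m else 0) := by
    rw [← htuple]
    field_simp
  rw [hsub]
  by_cases hP : ∀ j, μ j = p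
  · rw [if_pos hP, if_pos hP]
    have hZm : Z ^ m = 1 := by
      rw [hZdef, ← pow_mul]
      exact Even.neg_one_pow (by rw [mul_comm]; exact Nat.even_mul_succ_self m)
    rw [mul_pow, hZm, mul_one]
    field_simp
  · rw [if_neg hP, if_neg hP]
    simp
end

section
/- The root-sum expression satisfies the Pieri recurrence: for an m-tuple α = (α_1, …, α_m) of integers with w(α) := Σ_{l=1}^m (α_l − l) ≥ 1, define F(α) = (−1)^{m(m−1)/2} n^{−m} Σ_{I ⊆ R, #I = m} (∏_{k=1}^m y_k) · (Σ_{k=1}^m y_k)^{w(α)} · ∏_{1≤k<l≤m}(y_k − y_l) · det[(y_k^{\,n−α_j})_{1≤k,j≤m}], where y_1, …, y_m lists I and powers with negative integer exponents are interpreted via inverses (every y ∈ R is nonzero). Then F(α) = Σ_{a=1}^m F(α − e_a), where e_a is the a-th standard basis vector of ℤ^m. -/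
/-- The root-sum expression
`F(β) = (-1)^{m(m-1)/2} n^{-m} Σ_{I ⊆ R, #I = m}
(∏ y_k)·(Σ y_k)^{w(β)}·∏_{k<l}(y_k - y_l)·det[y_k^{n-β_j}]`,
where `w(β) = Σ_l (β_l - l)`, `y_1,…,y_m` lists the subset `I` via `L`, and
negative integer powers are interpreted via inverses. -/
noncomputable def Fval (m n : ℕ) (L : Finset ℂ → (Fin m → ℂ))
    (β : Fin m → ℤ) : ℂ :=
  (-1 : ℂ) ^ (m * (m - 1) / 2) * ((n : ℂ) ^ m)⁻¹ *
    ∑ I ∈ (rootsF m n).powersetCard m,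
      (∏ k : Fin m, L I k) *
        (∑ k : Fin m, L I k) ^ (∑ l : Fin m, (β l - ((l : ℤ) + 1))) *
        (∏ k : Fin m, ∏ l ∈ Finset.Ioi k, (L I k - L I l)) *
        Matrix.det (Matrix.of fun k j : Fin m => L I k ^ ((n : ℤ) - β j))

/-- Key determinant identity:
`(Σ y_k)·det[y_k^{c_j}] = Σ_a det[y_k^{c_j + δ_{ja}}]`. -/
lemma key_det {m : ℕ} (y : Fin m → ℂ) (hy : ∀ k, y k ≠ 0) (c : Fin m → ℤ) :
    (∑ k, y k) * Matrix.det (Matrix.of fun k j : Fin m => y k ^ c j) =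
    ∑ a : Fin m, Matrix.det (Matrix.of fun k j : Fin m =>
      y k ^ (c j + if j = a then 1 else 0)) := by
  simp only [Matrix.det_apply, Matrix.of_apply]
  rw [Finset.mul_sum, Finset.sum_comm]
  refine Finset.sum_congr rfl fun σ _ => ?_
  have h1 : ∀ a : Fin m, (∏ j, y (σ j) ^ (c j + if j = a then 1 else 0)) =
      y (σ a) * ∏ j, y (σ j) ^ c j := by
    intro a
    have : ∀ j : Fin m, y (σ j) ^ (c j + if j = a then 1 else 0) =
        y (σ j) ^ c j * (if j = a then y (σ j) else 1) := by
      intro j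
      rw [zpow_add₀ (hy _)]
      split_ifs <;> simp
    rw [Finset.prod_congr rfl fun j _ => this j, Finset.prod_mul_distrib,
      Finset.prod_ite_eq' Finset.univ a (fun j => y (σ j))]
    simp [mul_comm]
  simp only [h1, Units.smul_def, zsmul_eq_mul]
  have h2 : ∀ a : Fin m,
      ((Equiv.Perm.sign σ : ℤ) : ℂ) * (y (σ a) * ∏ j, y (σ j) ^ c j) =
      y (σ a) * (((Equiv.Perm.sign σ : ℤ) : ℂ) * ∏ j, y (σ j) ^ c j) := by
    intro a; ring
  rw [Finset.sum_congr rfl fun a _ => h2 a, ← Finset.sum_mul,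
    Equiv.sum_comp σ y]

/-- The root-sum expression satisfies the Pieri recurrence:
for every integer tuple `α` of weight `w(α) ≥ 1`,
`F(α) = Σ_a F(α - e_a)`. -/
theorem stmt15 (m p : ℕ) (hm : 1 ≤ m) (hp : 1 ≤ p) (n : ℕ) (hn : n = m + p)
    (L : Finset ℂ → (Fin m → ℂ))
    (hL : ∀ I : Finset ℂ, I.card = m →
      Function.Injective (L I) ∧ ∀ k, L I k ∈ I)
    (α : Fin m → ℤ) (hw : 1 ≤ ∑ l : Fin m, (α l - ((l : ℤ) + 1))) :
    Fval m n L α = ∑ a : Fin m, Fval m n L (α - Pi.single a 1) := by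
  have hn1 : 0 < n := by omega
  have hroot : ∀ y ∈ rootsF m n, y ≠ 0 := by
    intro y hy h0
    rw [rootsF, Multiset.mem_toFinset, Polynomial.mem_nthRoots hn1] at hy
    rw [h0, zero_pow (by omega)] at hy
    exact (pow_ne_zero (m + 1) (by norm_num : (-1 : ℂ) ≠ 0)) hy.symm
  unfold Fval
  conv_rhs => rw [← Finset.mul_sum]
  conv_rhs => rw [Finset.sum_comm]
  congr 1
  refine Finset.sum_congr rfl fun I hI => ?_
  rw [Finset.mem_powersetCard] at hI
  obtain ⟨hIsub, hIcard⟩ := hI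
  have hy : ∀ k, L I k ≠ 0 := fun k => hroot _ (hIsub ((hL I hIcard).2 k))
  set y := L I with hydef
  set S := ∑ k : Fin m, y k with hSdef
  set w := ∑ l : Fin m, (α l - ((l : ℤ) + 1)) with hwdef
  have hterm : ∀ a : Fin m,
      (∏ k : Fin m, y k) *
        (∑ k : Fin m, y k) ^ (∑ l : Fin m, (((α - Pi.single a 1 : Fin m → ℤ)) l - ((l : ℤ) + 1))) *
        (∏ k : Fin m, ∏ l ∈ Finset.Ioi k, (y k - y l)) *
        Matrix.det (Matrix.of fun k j : Fin m => y k ^ ((n : ℤ) - ((α - Pi.single a 1 : Fin m → ℤ)) j)) =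
      (∏ k : Fin m, y k) * S ^ (w - 1) *
        (∏ k : Fin m, ∏ l ∈ Finset.Ioi k, (y k - y l)) *
        Matrix.det (Matrix.of fun k j : Fin m =>
          y k ^ (((n : ℤ) - α j) + if j = a then 1 else 0)) := by
    intro a
    have hexp : (∑ l : Fin m, (((α - Pi.single a 1 : Fin m → ℤ)) l - ((l : ℤ) + 1))) = w - 1 := by
      have : ∀ l : Fin m, ((α - Pi.single a 1 : Fin m → ℤ)) l - ((l : ℤ) + 1) =
          (α l - ((l : ℤ) + 1)) - (if l = a then 1 else 0) := by
        intro l; simp [Pi.single_apply]; ring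
      rw [Finset.sum_congr rfl fun l _ => this l, Finset.sum_sub_distrib,
        Finset.sum_ite_eq' Finset.univ a (fun _ => (1 : ℤ))]
      simp [hwdef]
    have hmat : (Matrix.of fun k j : Fin m => y k ^ ((n : ℤ) - ((α - Pi.single a 1 : Fin m → ℤ)) j)) =
        (Matrix.of fun k j : Fin m => y k ^ (((n : ℤ) - α j) + if j = a then 1 else 0)) := by
      funext k j
      simp only [Matrix.of_apply]
      congr 1
      simp [Pi.single_apply]
      ring
    rw [hexp, hmat, ← hSdef]
  rw [Finset.sum_congr rfl fun a _ => hterm a, ← Finset.mul_sum,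
    ← key_det y hy (fun j => (n : ℤ) - α j)]
  rcases eq_or_ne S 0 with hS | hS
  · have hw0 : w ≠ 0 := by omega
    rw [← hSdef, hS, zero_zpow w hw0]
    ring
  · have hpow : S ^ w = S ^ (w - 1) * S := by
      rw [← zpow_add_one₀ hS (w - 1), (by omega : w - 1 + 1 = w)]
    rw [hpow]; ring
end
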